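/- arXiv:2305.05365 — 2 statements merged into one kernel-verified Lean document; each statement's English description precedes it below -/
import Mathlib

section
/- Let G be a simple graph on [n] and let m ≥ 2. Then the generalized binomial edge ideal J_{K_m,G} in S = K[x_{ij} : i ∈ [m], j ∈ [n]] equals the intersection over all T ∈ C(G) of the prime ideals P_T(K_m,G); in particular J_{K_m,G} is a radical ideal. -/
open MvPolynomial

noncomputable section


/-- The generalized binomial edge ideal `J_{K_m, G}` of a simple graph `G` on vertex set `V`,
inside `K[x_{ij} : i ∈ [m], j ∈ V]`. -/
def genBEI (K : Type) [Field K] (m : ℕ) {V : Type} (G : SimpleGraph V) :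
    Ideal (MvPolynomial (Fin m × V) K) :=
  Ideal.span {f | ∃ (i j : Fin m) (t l : V), i ≠ j ∧ G.Adj t l ∧
    f = X (i, t) * X (j, l) - X (i, l) * X (j, t)}

/-- The graded maximal (irrelevant) ideal of the polynomial ring, generated by all variables. -/
def irrelIdeal (K : Type) [Field K] (ι : Type) : Ideal (MvPolynomial ι K) :=
  Ideal.span (Set.range X)

/-- The depth of a module, defined as `min { i : H^i_I(M) ≠ 0 }` via local cohomology. -/
def lcDepth {R : Type} [CommRing R] (I : Ideal R) (M : ModuleCat R) : ℕ∞ :=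
  sInf {i : ℕ∞ | ∃ j : ℕ, (j : ℕ∞) = i ∧ Nontrivial ((localCohomology I j).obj M)}

/-- Depth of `S/J` over `S`, with respect to the graded maximal ideal. -/
def depthQ (K : Type) [Field K] {ι : Type} (J : Ideal (MvPolynomial ι K)) : ℕ∞ :=
  lcDepth (irrelIdeal K ι) (ModuleCat.of (MvPolynomial ι K) (MvPolynomial ι K ⧸ J))

/-- Term of the Koszul complex of a module `M` w.r.t. the variables of the polynomial ring. -/
abbrev kosT (ι : Type) (M : Type) (i : ℕ) := ({s : Finset ι // s.card = i}) → M

/-- The Koszul differential. -/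
def kosD (K : Type) [Field K] {ι : Type} [Fintype ι] [DecidableEq ι]
    {M : Type} [AddCommGroup M] [Module (MvPolynomial ι K) M] (i : ℕ) :
    kosT ι M (i + 1) →ₗ[MvPolynomial ι K] kosT ι M i :=
  LinearMap.pi fun t => ∑ a : ι,
    if h : a ∈ (t : Finset ι) then 0 else
      ((-1 : ℤ) ^ (((t : Finset ι).filter
          fun b => (Fintype.equivFin ι) b < (Fintype.equivFin ι) a).card)) •
        ((LinearMap.lsmul (MvPolynomial ι K) M (X a)).comp
          (LinearMap.proj (⟨insert a (t : Finset ι), by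
            rw [Finset.card_insert_of_notMem h, t.2]⟩ : {s : Finset ι // s.card = i + 1})))

/-- Nonvanishing of the internal-degree-`j` part of the `i`-th Koszul homology of a
graded module (with grading `gr`): there is a cycle all of whose components are homogeneous
of the appropriate degree that is not a boundary.  For finitely generated graded modules this
is equivalent to the graded Betti number `β_{i,j}(M)` being nonzero. -/
def kosHomNonzero (K : Type) [Field K] {ι : Type} [Fintype ι] [DecidableEq ι]
    {M : Type} [AddCommGroup M] [Module (MvPolynomial ι K) M]
    (gr : ℤ → Set M) (i : ℕ) (j : ℤ) : Prop :=
  match i with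
  | 0 => ∃ z : kosT ι M 0, (∀ s, z s ∈ gr j) ∧ z ∉ Set.range (kosD K (M := M) 0)
  | (i' + 1) => ∃ z : kosT ι M (i' + 1), z ∈ LinearMap.ker (kosD K (M := M) i') ∧
      (∀ s, z s ∈ gr (j - (i' + 1))) ∧ z ∉ Set.range (kosD K (M := M) (i' + 1))

/-- The Castelnuovo–Mumford regularity of a graded module (with grading `gr`), via the
standard characterization `reg M = max { j - i : β_{i,j}(M) ≠ 0 }` through Koszul homology.
The value `⊥ = -∞` occurs exactly for the zero module. -/
def kosReg (K : Type) [Field K] {ι : Type} [Fintype ι] [DecidableEq ι]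
    {M : Type} [AddCommGroup M] [Module (MvPolynomial ι K) M] (gr : ℤ → Set M) : EReal :=
  sSup {r : EReal | ∃ (i : ℕ) (j : ℤ), kosHomNonzero (ι := ι) K gr i j ∧ r = (((j - i : ℤ) : ℝ) : EReal)}

/-- The standard grading on `S/J` induced by the standard grading of the polynomial ring. -/
def stdGrading (K : Type) [Field K] {ι : Type} (J : Ideal (MvPolynomial ι K)) :
    ℤ → Set (MvPolynomial ι K ⧸ J) :=
  fun d => if 0 ≤ d then
    (Ideal.Quotient.mk J) '' (homogeneousSubmodule ι K d.toNat : Set (MvPolynomial ι K))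
  else {0}

/-- Castelnuovo–Mumford regularity of `S/J` for a homogeneous ideal `J`. -/
def regQ (K : Type) [Field K] {ι : Type} [Fintype ι] [DecidableEq ι]
    (J : Ideal (MvPolynomial ι K)) : EReal :=
  kosReg (ι := ι) (M := MvPolynomial ι K ⧸ J) K (stdGrading K J)



/-- A vertex `v` is a leaf (free vertex) if it has exactly one neighbor. -/
def IsLeafVert {V : Type} (G : SimpleGraph V) (v : V) : Prop := ∃! u, G.Adj v u

/-- Number of connected components of the induced subgraph `G ∖ T`. -/
def numComp {V : Type} (G : SimpleGraph V) (T : Finset V) : ℕ :=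
  Nat.card (G.induce {v : V | v ∉ T}).ConnectedComponent

/-- `T` has the cut point property: every `v ∈ T` is a cut vertex of `G ∖ (T ∖ {v})`. -/
def hasCutPointProperty {V : Type} [DecidableEq V] (G : SimpleGraph V) (T : Finset V) : Prop :=
  ∀ v ∈ T, numComp G (T.erase v) < numComp G T

/-- The collection `𝒞(G)` : the empty set together with all sets with the cut point property. -/
def cutSets {V : Type} [DecidableEq V] (G : SimpleGraph V) : Set (Finset V) :=
  {T | T = ∅ ∨ hasCutPointProperty G T}

/-- The prime ideal `P_T(K_m, G)`. -/
def PTIdeal (K : Type) [Field K] (m : ℕ) {V : Type} (G : SimpleGraph V) (T : Finset V) :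
    Ideal (MvPolynomial (Fin m × V) K) :=
  Ideal.span ({f | ∃ (i : Fin m) (j : V), j ∈ T ∧ f = X (i, j)} ∪
    {f | ∃ (i j : Fin m) (t l : V) (ht : t ∉ T) (hl : l ∉ T), i ≠ j ∧ t ≠ l ∧
      (G.induce {v : V | v ∉ T}).Reachable ⟨t, ht⟩ ⟨l, hl⟩ ∧
      f = X (i, t) * X (j, l) - X (i, l) * X (j, t)})

/-- The graph `G_v`, obtained from `G` by adding all edges between neighbors of `v`. -/
def addNbhdClique {V : Type} (G : SimpleGraph V) (v : V) : SimpleGraph V :=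
  G ⊔ SimpleGraph.fromRel (fun a b => G.Adj v a ∧ G.Adj v b)

/-- The graph `G ∖ v` (kept on the same vertex set, with `v` isolated). -/
def delVert {V : Type} (G : SimpleGraph V) (v : V) : SimpleGraph V :=
  SimpleGraph.fromRel (fun a b => G.Adj a b ∧ a ≠ v ∧ b ≠ v)

/-- Number of maximal cliques of `G`. -/
def maxCliqueCount {V : Type} (G : SimpleGraph V) : ℕ :=
  Nat.card {A : Set V // G.IsClique A ∧ ∀ B : Set V, G.IsClique B → A ⊆ B → B = A}

/-! ### Fan graphs -/

/-- Vertex set of the fan graph `F_k^W(K_n)`: the `n` vertices of `K_n` together with,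
for each branch graph `K_{a_{i,j}}`, its `h i j = a_{i,j} - j` new vertices. -/
def fanV (n k : ℕ) (r : Fin k → ℕ) (h : (i : Fin k) → Fin (r i) → ℕ) : Type :=
  Fin n ⊕ ((i : Fin k) × (j : Fin (r i)) × Fin (h i j))

instance (n k : ℕ) (r : Fin k → ℕ) (h : (i : Fin k) → Fin (r i) → ℕ) :
    Fintype (fanV n k r h) := by unfold fanV; infer_instance

instance (n k : ℕ) (r : Fin k → ℕ) (h : (i : Fin k) → Fin (r i) → ℕ) :
    DecidableEq (fanV n k r h) := by unfold fanV; infer_instance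

/-- The fan graph `F_k^W(K_n)`, where `W = W_1 ⊔ ⋯ ⊔ W_k`, `W_i = {w i 0, …, w i (r i - 1)}`
and the branch `K_{a_{i,j}}` on `W_i` has `h i j` new vertices and contains
`w i 0, …, w i j` among the vertices of `K_n`. -/
def fanG (n k : ℕ) (r : Fin k → ℕ) (w : (i : Fin k) → Fin (r i) → Fin n)
    (h : (i : Fin k) → Fin (r i) → ℕ) : SimpleGraph (fanV n k r h) :=
  SimpleGraph.fromRel fun u v =>
    match u, v with
    | Sum.inl _, Sum.inl _ => True
    | Sum.inl a, Sum.inr ⟨i, j, _⟩ => ∃ j' : Fin (r i), (j' : ℕ) ≤ (j : ℕ) ∧ w i j' = a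
    | Sum.inr ⟨i, j, _⟩, Sum.inr ⟨i', j', _⟩ => i = i' ∧ (j : ℕ) = (j' : ℕ)
    | Sum.inr _, Sum.inl _ => False

/-- The bipartite graph `F_p` on `[2p]`, with edges `{2i, 2j-1}` for `1 ≤ i ≤ j ≤ p`
(vertex labelled `ℓ` corresponds to `⟨ℓ-1, _⟩ : Fin (2*p)`). -/
def FpG (p : ℕ) : SimpleGraph (Fin (2 * p)) :=
  SimpleGraph.fromRel fun a b => ∃ i j : ℕ, 1 ≤ i ∧ i ≤ j ∧ j ≤ p ∧
    (a : ℕ) = 2 * i - 1 ∧ (b : ℕ) = 2 * j - 2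

/-! ### The `*` and `∘` operations -/

/-- Vertex set of `G₁ * G₂`: the leaves `f₁, f₂` get identified (with `f₁` as representative). -/
def starV (V₁ V₂ : Type) (f₂ : V₂) : Type := V₁ ⊕ {x : V₂ // x ≠ f₂}

instance (V₁ V₂ : Type) [Fintype V₁] [Fintype V₂] [DecidableEq V₂] (f₂ : V₂) :
    Fintype (starV V₁ V₂ f₂) := by unfold starV; infer_instance

instance (V₁ V₂ : Type) [DecidableEq V₁] [DecidableEq V₂] (f₂ : V₂) :
    DecidableEq (starV V₁ V₂ f₂) := by unfold starV; infer_instance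

/-- The graph `(G₁, f₁) * (G₂, f₂)`, obtained by identifying the leaf `f₁` of `G₁`
with the leaf `f₂` of `G₂`. -/
def starG {V₁ V₂ : Type} (G₁ : SimpleGraph V₁) (G₂ : SimpleGraph V₂) (f₁ : V₁) (f₂ : V₂) :
    SimpleGraph (starV V₁ V₂ f₂) :=
  SimpleGraph.fromRel fun u v =>
    match u, v with
    | Sum.inl a, Sum.inl b => G₁.Adj a b
    | Sum.inr x, Sum.inr y => G₂.Adj x.1 y.1
    | Sum.inl a, Sum.inr x => a = f₁ ∧ G₂.Adj f₂ x.1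
    | Sum.inr _, Sum.inl _ => False

/-- Vertex set of `G₁ ∘ G₂`: the leaves `f₁, f₂` are removed and the neighbors `v₁, v₂`
get identified (with `v₁` as representative). -/
def circV (V₁ V₂ : Type) (f₁ : V₁) (f₂ : V₂) (v₂ : V₂) : Type :=
  {x : V₁ // x ≠ f₁} ⊕ {x : V₂ // x ≠ f₂ ∧ x ≠ v₂}

instance (V₁ V₂ : Type) [Fintype V₁] [Fintype V₂] [DecidableEq V₁] [DecidableEq V₂]
    (f₁ : V₁) (f₂ : V₂) (v₂ : V₂) : Fintype (circV V₁ V₂ f₁ f₂ v₂) := by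
  unfold circV; infer_instance

instance (V₁ V₂ : Type) [DecidableEq V₁] [DecidableEq V₂] (f₁ : V₁) (f₂ : V₂) (v₂ : V₂) :
    DecidableEq (circV V₁ V₂ f₁ f₂ v₂) := by unfold circV; infer_instance

/-- The graph `(G₁, f₁) ∘ (G₂, f₂)`, obtained by deleting the leaves `f₁, f₂` and identifying
their neighbors `v₁` and `v₂`. -/
def circG {V₁ V₂ : Type} (G₁ : SimpleGraph V₁) (G₂ : SimpleGraph V₂)
    (f₁ : V₁) (v₁ : V₁) (f₂ : V₂) (v₂ : V₂) : SimpleGraph (circV V₁ V₂ f₁ f₂ v₂) :=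
  SimpleGraph.fromRel fun u v =>
    match u, v with
    | Sum.inl a, Sum.inl b => G₁.Adj a.1 b.1
    | Sum.inr x, Sum.inr y => G₂.Adj x.1 y.1
    | Sum.inl a, Sum.inr x => a.1 = v₁ ∧ G₂.Adj v₂ x.1
    | Sum.inr _, Sum.inl _ => False



namespace BEI
set_option linter.unusedSectionVars false
set_option linter.unusedVariables false

open MvPolynomial SimpleGraph

variable {K : Type} [Field K] {m : ℕ} {V : Type}

/-- shorthand for the 2-minor -/
def mnr (K : Type) [Field K] (m : ℕ) {V : Type} (i j : Fin m) (t l : V) :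
    MvPolynomial (Fin m × V) K := X (i, t) * X (j, l) - X (i, l) * X (j, t)

lemma mnr_self (i : Fin m) (t l : V) : mnr K m i i t l = 0 := by
  unfold mnr; ring

lemma mnr_mem_genBEI {G : SimpleGraph V} {i j : Fin m} {t l : V} (hadj : G.Adj t l) :
    mnr K m i j t l ∈ genBEI K m G := by
  by_cases hij : i = j
  · subst hij; rw [mnr_self]; exact zero_mem _
  · exact Ideal.subset_span ⟨i, j, t, l, hij, hadj, rfl⟩

lemma genBEI_mono {G G' : SimpleGraph V} (h : G ≤ G') : genBEI K m G ≤ genBEI K m G' := by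
  apply Ideal.span_mono
  rintro f ⟨i, j, t, l, hij, hadj, rfl⟩
  exact ⟨i, j, t, l, hij, h hadj, rfl⟩

lemma X_mem_PT {G : SimpleGraph V} {T : Finset V} (i : Fin m) {j : V} (hj : j ∈ T) :
    X (i, j) ∈ PTIdeal K m G T :=
  Ideal.subset_span (Or.inl ⟨i, j, hj, rfl⟩)

lemma mnr_mem_PT {G : SimpleGraph V} {T : Finset V} {i j : Fin m} {t l : V}
    (ht : t ∉ T) (hl : l ∉ T) (htl : t ≠ l)
    (hr : (G.induce {v : V | v ∉ T}).Reachable ⟨t, ht⟩ ⟨l, hl⟩) :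
    mnr K m i j t l ∈ PTIdeal K m G T := by
  by_cases hij : i = j
  · subst hij; rw [mnr_self]; exact zero_mem _
  · exact Ideal.subset_span (Or.inr ⟨i, j, t, l, ht, hl, hij, htl, hr, rfl⟩)

lemma mnr_mem_of_var_left {G : SimpleGraph V} {T : Finset V} {i j : Fin m} {t l : V}
    (ht : t ∈ T) : mnr K m i j t l ∈ PTIdeal K m G T := by
  unfold mnr
  exact sub_mem (Ideal.mul_mem_right _ _ (X_mem_PT i ht))
    (Ideal.mul_mem_left _ _ (X_mem_PT j ht))

lemma mnr_mem_of_var_right {G : SimpleGraph V} {T : Finset V} {i j : Fin m} {t l : V}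
    (hl : l ∈ T) : mnr K m i j t l ∈ PTIdeal K m G T := by
  unfold mnr
  exact sub_mem (Ideal.mul_mem_left _ _ (X_mem_PT j hl))
    (Ideal.mul_mem_right _ _ (X_mem_PT i hl))

lemma genBEI_le_PT (G : SimpleGraph V) (T : Finset V) :
    genBEI K m G ≤ PTIdeal K m G T := by
  rw [genBEI, Ideal.span_le]
  rintro f ⟨i, j, t, l, hij, hadj, rfl⟩
  have hf : (X (i, t) * X (j, l) - X (i, l) * X (j, t) : MvPolynomial (Fin m × V) K)
      = mnr K m i j t l := rfl
  rw [hf]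
  by_cases ht : t ∈ T
  · exact mnr_mem_of_var_left ht
  by_cases hl : l ∈ T
  · exact mnr_mem_of_var_right hl
  · exact mnr_mem_PT ht hl hadj.ne (SimpleGraph.Adj.reachable (by exact hadj))

lemma reach_transfer {H : SimpleGraph V} {s s' : Set V} (hss : s ⊆ s') {a b : ↥s}
    (h : (H.induce s).Reachable a b) :
    (H.induce s').Reachable ⟨a.1, hss a.2⟩ ⟨b.1, hss b.2⟩ := by
  let F : H.induce s →g H.induce s' :=
    ⟨fun x => ⟨x.1, hss x.2⟩, fun {x y} hxy => hxy⟩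
  exact h.map F

lemma PT_mono_graph {G G' : SimpleGraph V} (h : G ≤ G') (T : Finset V) :
    PTIdeal K m G T ≤ PTIdeal K m G' T := by
  apply Ideal.span_mono
  rintro f (hf | ⟨i, j, t, l, ht, hl, hij, htl, hr, rfl⟩)
  · exact Or.inl hf
  · refine Or.inr ⟨i, j, t, l, ht, hl, hij, htl, ?_, rfl⟩
    refine hr.mono ?_
    intro a b hab
    exact h hab



variable {K : Type} [Field K] {m : ℕ} {V : Type}

/-- the ideal generated by the variables of column `v` -/
def colIdeal (K : Type) [Field K] (m : ℕ) {V : Type} (v : V) :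
    Ideal (MvPolynomial (Fin m × V) K) := Ideal.span {g | ∃ i : Fin m, g = X (i, v)}

/-- evaluation setting column `v` to zero -/
noncomputable def rho (K : Type) [Field K] (m : ℕ) {V : Type} [DecidableEq V] (v : V) :
    MvPolynomial (Fin m × V) K →ₐ[K] MvPolynomial (Fin m × V) K :=
  aeval (fun p : Fin m × V => if p.2 = v then 0 else X p)

variable [DecidableEq V] {v : V}

lemma rho_X (i : Fin m) (j : V) :
    rho K m v (X (i, j)) = if j = v then 0 else X (i, j) := by
  simp [rho]

lemma rho_X_of_ne {i : Fin m} {j : V} (h : j ≠ v) : rho K m v (X (i, j)) = X (i, j) := by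
  rw [rho_X, if_neg h]

lemma rho_X_self (i : Fin m) : rho K m v (X (i, v)) = 0 := by
  rw [rho_X, if_pos rfl]

lemma rho_mnr_of_ne {i j : Fin m} {t l : V} (ht : t ≠ v) (hl : l ≠ v) :
    rho K m v (mnr K m i j t l) = mnr K m i j t l := by
  unfold mnr
  simp [map_sub, map_mul, rho_X_of_ne ht, rho_X_of_ne hl]

lemma sub_rho_mem_colIdeal (f : MvPolynomial (Fin m × V) K) :
    f - rho K m v f ∈ colIdeal K m v := by
  induction f using MvPolynomial.induction_on with
  | C a => simp [rho]
  | add p q hp hq =>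
      have : p + q - rho K m v (p + q) = (p - rho K m v p) + (q - rho K m v q) := by
        rw [map_add]; ring
      rw [this]; exact add_mem hp hq
  | mul_X p s hp =>
      rw [map_mul]
      by_cases hs : s.2 = v
      · have hX : rho K m v (X s) = 0 := by
          rw [show s = (s.1, s.2) from rfl]
          rw [show (s.1, s.2).2 = v from hs] at *
          rw [rho_X, if_pos hs]
        rw [hX, mul_zero, sub_zero]
        have hXmem : (X s : MvPolynomial (Fin m × V) K) ∈ colIdeal K m v := by
          apply Ideal.subset_span
          exact ⟨s.1, by rw [show s = (s.1, s.2) from rfl, hs]⟩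
        exact Ideal.mul_mem_left _ _ hXmem
      · have hX : rho K m v (X s) = X s := by
          rw [show s = (s.1, s.2) from rfl, rho_X, if_neg hs]
        rw [hX]
        have : p * X s - rho K m v p * X s = (p - rho K m v p) * X s := by ring
        rw [this]
        exact Ideal.mul_mem_right _ _ hp

lemma rho_colIdeal_zero {f : MvPolynomial (Fin m × V) K} (hf : f ∈ colIdeal K m v) :
    rho K m v f = 0 := by
  refine Submodule.span_induction ?_ ?_ ?_ ?_ hf
  · rintro g ⟨i, rfl⟩; exact rho_X_self i
  · simp
  · intro a b _ _ ha hb; rw [map_add, ha, hb, add_zero]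
  · intro a b _ hb; rw [smul_eq_mul, map_mul, hb, mul_zero]

lemma rho_genBEI_le {G : SimpleGraph V} {f : MvPolynomial (Fin m × V) K}
    (hf : f ∈ genBEI K m G) : rho K m v f ∈ genBEI K m (delVert G v) := by
  have h1 : rho K m v f ∈ Ideal.map (rho K m v).toRingHom (genBEI K m G) :=
    Ideal.mem_map_of_mem _ hf
  rw [genBEI, Ideal.map_span] at h1
  refine Ideal.span_le.mpr ?_ h1
  rintro g ⟨g', ⟨i, j, t, l, hij, hadj, rfl⟩, rfl⟩
  have hform : (X (i, t) * X (j, l) - X (i, l) * X (j, t) : MvPolynomial (Fin m × V) K)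
      = mnr K m i j t l := rfl
  simp only [AlgHom.toRingHom_eq_coe, RingHom.coe_coe, hform]
  by_cases ht : t = v
  · have : rho K m v (mnr K m i j t l) = 0 := by
      subst ht
      unfold mnr
      simp [map_sub, map_mul, rho_X_self]
    rw [this]; exact zero_mem _
  by_cases hl : l = v
  · have : rho K m v (mnr K m i j t l) = 0 := by
      subst hl
      unfold mnr
      simp [map_sub, map_mul, rho_X_self]
    rw [this]; exact zero_mem _
  · rw [rho_mnr_of_ne ht hl]
    apply mnr_mem_genBEI
    rw [delVert, SimpleGraph.fromRel_adj]
    exact ⟨hadj.ne, Or.inl ⟨hadj, ht, hl⟩⟩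

lemma delVert_le {G : SimpleGraph V} : delVert G v ≤ G := by
  intro a b hab
  rw [delVert, SimpleGraph.fromRel_adj] at hab
  rcases hab.2 with ⟨h, _, _⟩ | ⟨h, _, _⟩
  · exact h
  · exact h.symm

lemma rho_genBEI_delVert {G : SimpleGraph V} {f : MvPolynomial (Fin m × V) K}
    (hf : f ∈ genBEI K m (delVert G v)) : rho K m v f ∈ genBEI K m (delVert G v) := by
  have h1 : rho K m v f ∈ Ideal.map (rho K m v).toRingHom (genBEI K m (delVert G v)) :=
    Ideal.mem_map_of_mem _ hf
  rw [genBEI, Ideal.map_span] at h1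
  refine Ideal.span_le.mpr ?_ h1
  rintro g ⟨g', ⟨i, j, t, l, hij, hadj, rfl⟩, rfl⟩
  have hform : (X (i, t) * X (j, l) - X (i, l) * X (j, t) : MvPolynomial (Fin m × V) K)
      = mnr K m i j t l := rfl
  simp only [AlgHom.toRingHom_eq_coe, RingHom.coe_coe, hform]
  have hadj' := hadj
  rw [delVert, SimpleGraph.fromRel_adj] at hadj'
  have htv : t ≠ v := by
    rcases hadj'.2 with ⟨_, h1', _⟩ | ⟨_, _, h2'⟩ <;> assumption
  have hlv : l ≠ v := by
    rcases hadj'.2 with ⟨_, _, h2'⟩ | ⟨_, h1', _⟩ <;> assumption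
  rw [rho_mnr_of_ne htv hlv]
  exact mnr_mem_genBEI hadj

/-- The key identity: column-`v` variables multiply neighbor minors into `J_G`. -/
lemma colv_mul_mnr_mem {G : SimpleGraph V} {t l : V} (hvt : G.Adj v t) (hvl : G.Adj v l)
    (k i j : Fin m) : X (k, v) * mnr K m i j t l ∈ genBEI K m G := by
  have key : X (k, v) * mnr K m i j t l =
      X (j, l) * mnr K m i k t v + X (k, t) * mnr K m i j v l
        - X (i, l) * mnr K m j k t v := by
    unfold mnr; ring
  rw [key]
  exact sub_mem
    (add_mem (Ideal.mul_mem_left _ _ (mnr_mem_genBEI hvt.symm))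
      (Ideal.mul_mem_left _ _ (mnr_mem_genBEI hvl)))
    (Ideal.mul_mem_left _ _ (mnr_mem_genBEI hvt.symm))

lemma colIdeal_mul_mnr_mem {G : SimpleGraph V} {t l : V} (hvt : G.Adj v t) (hvl : G.Adj v l)
    (i j : Fin m) {x : MvPolynomial (Fin m × V) K} (hx : x ∈ colIdeal K m v) :
    x * mnr K m i j t l ∈ genBEI K m G := by
  refine Submodule.span_induction ?_ ?_ ?_ ?_ hx
  · rintro g ⟨k, rfl⟩; exact colv_mul_mnr_mem hvt hvl k i j
  · rw [zero_mul]; exact zero_mem _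
  · intro a b _ _ ha hb; rw [add_mul]; exact add_mem ha hb
  · intro a b _ hb
    rw [smul_eq_mul, mul_assoc]
    exact Ideal.mul_mem_left _ _ hb



variable {K : Type} [Field K] {m : ℕ} {V : Type} [DecidableEq V] {v : V}

lemma ohtani {G : SimpleGraph V} {f : MvPolynomial (Fin m × V) K}
    (h1 : f ∈ genBEI K m (addNbhdClique G v))
    (h2 : f ∈ colIdeal K m v ⊔ genBEI K m (delVert G v)) :
    f ∈ genBEI K m G := by
  classical
  set NS : Set (MvPolynomial (Fin m × V) K) :=
    {g | ∃ (i j : Fin m) (t l : V), G.Adj v t ∧ G.Adj v l ∧ g = mnr K m i j t l} with hNS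
  -- Step 1 : split J_{G_v} ≤ J_G ⊔ span NS
  have hsplit : genBEI K m (addNbhdClique G v) ≤ genBEI K m G ⊔ Ideal.span NS := by
    rw [genBEI, Ideal.span_le]
    rintro g ⟨i, j, t, l, hij, hadj, rfl⟩
    have hform : (X (i, t) * X (j, l) - X (i, l) * X (j, t) : MvPolynomial (Fin m × V) K)
        = mnr K m i j t l := rfl
    rw [hform]
    rw [addNbhdClique, SimpleGraph.sup_adj] at hadj
    rcases hadj with hadj | hadj
    · exact Ideal.mem_sup_left (mnr_mem_genBEI hadj)
    · rw [SimpleGraph.fromRel_adj] at hadj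
      rcases hadj.2 with ⟨h1', h2'⟩ | ⟨h1', h2'⟩
      · exact Ideal.mem_sup_right (Ideal.subset_span ⟨i, j, t, l, h1', h2', rfl⟩)
      · exact Ideal.mem_sup_right (Ideal.subset_span ⟨i, j, t, l, h2', h1', rfl⟩)
  have hf1 := hsplit h1
  rw [Submodule.mem_sup] at hf1
  obtain ⟨g, hg, p, hp, rfl⟩ := hf1
  rw [Ideal.span, Submodule.mem_span_set] at hp
  obtain ⟨c, hsupp, hsum⟩ := hp
  rw [Finsupp.sum] at hsum
  -- facts about each q in the support
  have hq_fix : ∀ q ∈ c.support, rho K m v q = q := by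
    intro q hq
    obtain ⟨i, j, t, l, hvt, hvl, rfl⟩ := hsupp hq
    exact rho_mnr_of_ne (fun h => (h ▸ hvt).ne rfl) (fun h => (h ▸ hvl).ne rfl)
  have hterm : ∀ q ∈ c.support, c q • q - rho K m v (c q • q) ∈ genBEI K m G := by
    intro q hq
    obtain ⟨i, j, t, l, hvt, hvl, hqe⟩ := hsupp hq
    have : c q • q - rho K m v (c q • q)
        = (c q - rho K m v (c q)) * q := by
      rw [smul_eq_mul, map_mul, hq_fix q hq]
      ring
    rw [this, hqe]
    exact colIdeal_mul_mnr_mem hvt hvl i j (sub_rho_mem_colIdeal _)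
  -- p - rho p ∈ J_G
  have hpsub : p - rho K m v p ∈ genBEI K m G := by
    rw [← hsum, map_sum, ← Finset.sum_sub_distrib]
    exact Ideal.sum_mem _ hterm
  -- rho f ∈ J_{G'}
  have hrf : rho K m v (g + p) ∈ genBEI K m (delVert G v) := by
    rw [Submodule.mem_sup] at h2
    obtain ⟨x, hx, d, hd, hxd⟩ := h2
    rw [← hxd, map_add, rho_colIdeal_zero hx, zero_add]
    exact rho_genBEI_delVert hd
  have hrg : rho K m v g ∈ genBEI K m (delVert G v) := rho_genBEI_le hg
  have hrp : rho K m v p ∈ genBEI K m G := by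
    have : rho K m v p = rho K m v (g + p) - rho K m v g := by
      rw [map_add]; ring
    rw [this]
    exact genBEI_mono delVert_le (sub_mem hrf hrg)
  have : g + p = g + (p - rho K m v p) + rho K m v p := by ring
  rw [this]
  exact add_mem (add_mem hg hpsub) hrp



variable {K : Type} [Field K] {m : ℕ} {V : Type} [DecidableEq V] {v : V}

lemma adj_of_reach_simp {G : SimpleGraph V}
    (hs : ∀ a t l : V, G.Adj a t → G.Adj a l → t ≠ l → G.Adj t l) :
    ∀ {t l : V}, G.Reachable t l → t ≠ l → G.Adj t l := by
  intro t l hr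
  obtain ⟨w⟩ := hr
  induction w with
  | nil => intro h; exact absurd rfl h
  | @cons a b c hab p ih =>
      intro hac
      by_cases hbc : b = c
      · subst hbc; exact hab
      · have hbc' := ih hbc
        by_cases hab' : a = b
        · subst hab'; exact hbc'
        · exact hs b a c hab.symm hbc' hac

lemma PT_empty_le {G : SimpleGraph V}
    (hs : ∀ a t l : V, G.Adj a t → G.Adj a l → t ≠ l → G.Adj t l) :
    PTIdeal K m G (∅ : Finset V) ≤ genBEI K m G := by
  rw [PTIdeal, Ideal.span_le]
  rintro f (⟨i, j, hj, rfl⟩ | ⟨i, j, t, l, ht, hl, hij, htl, hr, rfl⟩)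
  · exact absurd hj (Finset.notMem_empty _)
  · have hform : (X (i, t) * X (j, l) - X (i, l) * X (j, t) : MvPolynomial (Fin m × V) K)
        = mnr K m i j t l := rfl
    rw [hform]
    have hrG : G.Reachable t l := by
      let F : G.induce {x : V | x ∉ (∅ : Finset V)} →g G :=
        ⟨fun x => x.1, fun {x y} hxy => hxy⟩
      exact hr.map F
    exact mnr_mem_genBEI (adj_of_reach_simp hs hrG htl)

lemma induce_delVert_eq {G : SimpleGraph V} {T : Finset V} (hv : v ∈ T) :
    G.induce {x : V | x ∉ T} = (delVert G v).induce {x : V | x ∉ T} := by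
  ext a b
  show G.Adj a.1 b.1 ↔ (delVert G v).Adj a.1 b.1
  rw [delVert, SimpleGraph.fromRel_adj]
  have hav : a.1 ≠ v := fun h => a.2 (h ▸ hv)
  have hbv : b.1 ≠ v := fun h => b.2 (h ▸ hv)
  constructor
  · intro h; exact ⟨h.ne, Or.inl ⟨h, hav, hbv⟩⟩
  · rintro ⟨_, ⟨h, _, _⟩ | ⟨h, _, _⟩⟩
    · exact h
    · exact h.symm

lemma PT_delVert_eq {G : SimpleGraph V} {T : Finset V} (hv : v ∈ T) :
    PTIdeal K m G T = PTIdeal K m (delVert G v) T := by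
  rw [PTIdeal, PTIdeal, induce_delVert_eq hv]

lemma rho_PT {H : SimpleGraph V} {T : Finset V} {f : MvPolynomial (Fin m × V) K}
    (hf : f ∈ PTIdeal K m H (insert v T)) :
    rho K m v f ∈ PTIdeal K m H T := by
  have h1 : rho K m v f ∈ Ideal.map (rho K m v).toRingHom (PTIdeal K m H (insert v T)) :=
    Ideal.mem_map_of_mem _ hf
  rw [PTIdeal, Ideal.map_span] at h1
  refine Ideal.span_le.mpr ?_ h1
  rintro g ⟨g', (⟨i, j, hj, rfl⟩ | ⟨i, j, t, l, ht, hl, hij, htl, hr, rfl⟩), rfl⟩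
  · simp only [AlgHom.toRingHom_eq_coe, RingHom.coe_coe]
    by_cases hjv : j = v
    · subst hjv; rw [rho_X_self]; exact zero_mem _
    · rw [rho_X_of_ne hjv]
      exact X_mem_PT i (by
        rcases Finset.mem_insert.mp hj with h | h
        · exact absurd h hjv
        · exact h)
  · simp only [AlgHom.toRingHom_eq_coe, RingHom.coe_coe]
    have hform : (X (i, t) * X (j, l) - X (i, l) * X (j, t) : MvPolynomial (Fin m × V) K)
        = mnr K m i j t l := rfl
    rw [hform]
    have htv : t ≠ v := fun h => ht (h ▸ Finset.mem_insert_self v T)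
    have hlv : l ≠ v := fun h => hl (h ▸ Finset.mem_insert_self v T)
    rw [rho_mnr_of_ne htv hlv]
    have ht' : t ∉ T := fun h => ht (Finset.mem_insert_of_mem h)
    have hl' : l ∉ T := fun h => hl (Finset.mem_insert_of_mem h)
    have hss : {x : V | x ∉ (insert v T : Finset V)} ⊆ {x : V | x ∉ T} := by
      intro x hx hxT
      exact hx (Finset.mem_insert_of_mem hxT)
    exact mnr_mem_PT ht' hl' htl (reach_transfer hss hr)



variable {K : Type} [Field K] {m : ℕ} {V : Type} [DecidableEq V] [Finite V]

/-- induction measure: (#non-isolated vertices) * (|V|²+1) + #non-adjacent ordered pairs -/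
def meas {V : Type} (G : SimpleGraph V) : ℕ :=
  ({x : V | ∃ u, G.Adj x u}.ncard) * (Nat.card V * Nat.card V + 1) +
    ({p : V × V | p.1 ≠ p.2 ∧ ¬ G.Adj p.1 p.2}).ncard

lemma mis_le_sq (G : SimpleGraph V) :
    ({p : V × V | p.1 ≠ p.2 ∧ ¬ G.Adj p.1 p.2}).ncard ≤ Nat.card V * Nat.card V := by
  have h := Set.ncard_le_ncard (Set.subset_univ {p : V × V | p.1 ≠ p.2 ∧ ¬ G.Adj p.1 p.2})
    Set.finite_univ
  rw [Set.ncard_univ, Nat.card_prod] at h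
  exact h

lemma meas_addNbhd_lt {G : SimpleGraph V} {v a b : V} (ha : G.Adj v a) (hb : G.Adj v b)
    (hab : a ≠ b) (hnadj : ¬ G.Adj a b) : meas (addNbhdClique G v) < meas G := by
  have hnon : {x : V | ∃ u, (addNbhdClique G v).Adj x u} = {x : V | ∃ u, G.Adj x u} := by
    ext x
    simp only [Set.mem_setOf_eq]
    constructor
    · rintro ⟨u, hu⟩
      rw [addNbhdClique, SimpleGraph.sup_adj] at hu
      rcases hu with hu | hu
      · exact ⟨u, hu⟩
      · rw [SimpleGraph.fromRel_adj] at hu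
        rcases hu.2 with ⟨h1, _⟩ | ⟨_, h2⟩
        · exact ⟨v, h1.symm⟩
        · exact ⟨v, h2.symm⟩
    · rintro ⟨u, hu⟩
      exact ⟨u, by rw [addNbhdClique, SimpleGraph.sup_adj]; exact Or.inl hu⟩
  have hmis : {p : V × V | p.1 ≠ p.2 ∧ ¬ (addNbhdClique G v).Adj p.1 p.2} ⊂
      {p : V × V | p.1 ≠ p.2 ∧ ¬ G.Adj p.1 p.2} := by
    constructor
    · rintro ⟨x, y⟩ ⟨hxy, hna⟩
      refine ⟨hxy, fun h => hna ?_⟩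
      rw [addNbhdClique, SimpleGraph.sup_adj]; exact Or.inl h
    · intro hsub
      have hmem : ((a, b) : V × V) ∈ {p : V × V | p.1 ≠ p.2 ∧ ¬ G.Adj p.1 p.2} := ⟨hab, hnadj⟩
      have := hsub hmem
      refine this.2 ?_
      rw [addNbhdClique, SimpleGraph.sup_adj, SimpleGraph.fromRel_adj]
      exact Or.inr ⟨hab, Or.inl ⟨ha, hb⟩⟩
  have h2 := Set.ncard_lt_ncard hmis (Set.toFinite _)
  unfold meas
  rw [hnon]
  omega

lemma meas_delVert_lt {G : SimpleGraph V} {v : V} (hv : ∃ u, G.Adj v u) :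
    meas (delVert G v) < meas G := by
  have hnon : {x : V | ∃ u, (delVert G v).Adj x u} ⊂ {x : V | ∃ u, G.Adj x u} := by
    constructor
    · rintro x ⟨u, hu⟩
      exact ⟨u, delVert_le hu⟩
    · intro hsub
      have hvmem := hsub hv
      obtain ⟨u, hu⟩ := hvmem
      rw [delVert, SimpleGraph.fromRel_adj] at hu
      rcases hu.2 with ⟨_, h1, _⟩ | ⟨_, _, h2⟩
      · exact h1 rfl
      · exact h2 rfl
  have h1 := Set.ncard_lt_ncard hnon (Set.toFinite _)
  have h2 := mis_le_sq (V := V) (delVert G v)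
  unfold meas
  nlinarith [h1, h2]

lemma main_inc (K : Type) [Field K] (m : ℕ) :
    ∀ (N : ℕ) (G : SimpleGraph V), meas G ≤ N →
      (⨅ T : Finset V, PTIdeal K m G T) ≤ genBEI K m G := by
  intro N
  induction N with
  | zero =>
      intro G hG
      by_cases hs : ∀ a t l : V, G.Adj a t → G.Adj a l → t ≠ l → G.Adj t l
      · exact le_trans (iInf_le _ ∅) (PT_empty_le hs)
      · exfalso
        push_neg at hs
        obtain ⟨a, t, l, hat, hal, htl, hnadj⟩ := hs
        have hmem : ((t, l) : V × V) ∈ {p : V × V | p.1 ≠ p.2 ∧ ¬ G.Adj p.1 p.2} :=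
          ⟨htl, hnadj⟩
        have hpos : 0 < ({p : V × V | p.1 ≠ p.2 ∧ ¬ G.Adj p.1 p.2}).ncard := by
          rw [Set.ncard_pos (Set.toFinite _)]
          exact ⟨_, hmem⟩
        unfold meas at hG
        omega
  | succ N ih =>
      intro G hG
      by_cases hs : ∀ a t l : V, G.Adj a t → G.Adj a l → t ≠ l → G.Adj t l
      · exact le_trans (iInf_le _ ∅) (PT_empty_le hs)
      push_neg at hs
      obtain ⟨v, a, b, hva, hvb, hab, hnadj⟩ := hs
      intro f hf
      have hPT : ∀ T : Finset V, f ∈ PTIdeal K m G T :=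
        fun T => (Submodule.mem_iInf _).mp hf T
      have hfGv : f ∈ genBEI K m (addNbhdClique G v) := by
        refine ih (addNbhdClique G v) ?_ ?_
        · have := meas_addNbhd_lt hva hvb hab hnadj
          omega
        · exact (Submodule.mem_iInf _).mpr fun T => PT_mono_graph le_sup_left T (hPT T)
      have hrf : rho K m v f ∈ genBEI K m (delVert G v) := by
        refine ih (delVert G v) ?_ ?_
        · have := meas_delVert_lt (G := G) (v := v) ⟨a, hva⟩
          omega
        · refine (Submodule.mem_iInf _).mpr fun T => ?_
          have h1 := hPT (insert v T)
          rw [PT_delVert_eq (Finset.mem_insert_self v T)] at h1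
          exact rho_PT h1
      have h2 : f ∈ colIdeal K m v ⊔ genBEI K m (delVert G v) :=
        Submodule.mem_sup.mpr ⟨f - rho K m v f, sub_rho_mem_colIdeal f,
          rho K m v f, hrf, by ring⟩
      exact ohtani hfGv h2



variable {K : Type} [Field K] {m : ℕ} {V : Type} [DecidableEq V] [Finite V]

section CutRed

variable {G : SimpleGraph V} {T : Finset V} {v : V}

private lemma mem_B_of_A {x : V} (hv : v ∈ T) (hx : x ∉ T.erase v) (hxv : x ≠ v) : x ∉ T :=
  fun hxT => hx (Finset.mem_erase.mpr ⟨hxv, hxT⟩)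

lemma walk_avoid (hv : v ∈ T) :
    ∀ {x y : {z : V // z ∉ T.erase v}}
      (w : (G.induce {z : V | z ∉ T.erase v}).Walk x y),
      (∀ z ∈ w.support, z.1 ≠ v) → ∀ (hx : x.1 ∉ T) (hy : y.1 ∉ T),
      (G.induce {z : V | z ∉ T}).Reachable ⟨x.1, hx⟩ ⟨y.1, hy⟩ := by
  intro x y w
  induction w with
  | nil =>
      intro _ hx hy
      exact Reachable.refl _
  | @cons x' s y' h p ih =>
      intro hsup hx hy
      have hsv : s.1 ≠ v := by
        refine hsup s ?_
        rw [SimpleGraph.Walk.support_cons]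
        exact List.mem_cons_of_mem _ p.start_mem_support
      have hsB : s.1 ∉ T := mem_B_of_A hv s.2 hsv
      have hadj : (G.induce {z : V | z ∉ T}).Adj ⟨x'.1, hx⟩ ⟨s.1, hsB⟩ := h
      refine (hadj.reachable).trans (ih ?_ hsB hy)
      intro z hz
      refine hsup z ?_
      rw [SimpleGraph.Walk.support_cons]
      exact List.mem_cons_of_mem _ hz

lemma reach_in_erase (hv : v ∈ T) (hnc : numComp G T ≤ numComp G (T.erase v))
    {t l : V} (ht : t ∉ T) (hl : l ∉ T)
    (ht' : t ∉ T.erase v) (hl' : l ∉ T.erase v)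
    (hr : (G.induce {z : V | z ∉ T.erase v}).Reachable ⟨t, ht'⟩ ⟨l, hl'⟩) :
    (G.induce {z : V | z ∉ T}).Reachable ⟨t, ht⟩ ⟨l, hl⟩ := by
  classical
  by_contra hnot
  set HA := G.induce {z : V | z ∉ T.erase v} with hHA
  set HB := G.induce {z : V | z ∉ T} with hHB
  have hBA : ∀ {x : V}, x ∉ T → x ∉ T.erase v := fun hx hxe => hx (Finset.mem_of_mem_erase hxe)
  let F : HB →g HA := ⟨fun x => ⟨x.1, hBA x.2⟩, fun {x y} hxy => hxy⟩
  let q : HB.ConnectedComponent → HA.ConnectedComponent := ConnectedComponent.map F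
  obtain ⟨w⟩ := hr
  have hvA : v ∉ T.erase v := Finset.notMem_erase v T
  -- every walk from t to l in HA passes through v
  have hvw : ∃ z ∈ w.support, z.1 = v := by
    by_contra hno
    push_neg at hno
    exact hnot (walk_avoid hv w hno ht hl)
  obtain ⟨z, hzs, hzv⟩ := hvw
  have hzeq : z = ⟨v, hvA⟩ := Subtype.ext hzv
  have hvt : HA.Reachable ⟨t, ht'⟩ (⟨v, hvA⟩ : {z : V // z ∉ T.erase v}) := by
    rw [← hzeq]; exact ⟨w.takeUntil z hzs⟩
  -- q is surjective
  have hqsurj : Function.Surjective q := by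
    refine ConnectedComponent.ind fun x => ?_
    by_cases hxv : x.1 = v
    · refine ⟨HB.connectedComponentMk ⟨t, ht⟩, ?_⟩
      show HA.connectedComponentMk (F ⟨t, ht⟩) = _
      rw [ConnectedComponent.eq]
      have hxeq : x = (⟨v, hvA⟩ : {z : V // z ∉ T.erase v}) := Subtype.ext hxv
      rw [hxeq]
      exact hvt
    · have hxB : x.1 ∉ T := mem_B_of_A hv x.2 hxv
      refine ⟨HB.connectedComponentMk ⟨x.1, hxB⟩, ?_⟩
      show HA.connectedComponentMk (F ⟨x.1, hxB⟩) = _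
      congr 1
  -- finiteness
  haveI : Finite HA.ConnectedComponent :=
    Finite.of_surjective HA.connectedComponentMk (fun C => C.exists_rep)
  haveI : Finite HB.ConnectedComponent :=
    Finite.of_surjective HB.connectedComponentMk (fun C => C.exists_rep)
  have hcard1 : Nat.card HA.ConnectedComponent ≤ Nat.card HB.ConnectedComponent :=
    Nat.card_le_card_of_surjective q hqsurj
  have hcard2 : Nat.card HB.ConnectedComponent ≤ Nat.card HA.ConnectedComponent := hnc
  -- q is bijective hence injective
  haveI := Fintype.ofFinite HA.ConnectedComponent
  haveI := Fintype.ofFinite HB.ConnectedComponent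
  have hbij : Function.Bijective q := by
    rw [Fintype.bijective_iff_surjective_and_card]
    constructor
    · exact hqsurj
    · rw [← Nat.card_eq_fintype_card, ← Nat.card_eq_fintype_card]
      omega
  have heq : q (HB.connectedComponentMk ⟨t, ht⟩) = q (HB.connectedComponentMk ⟨l, hl⟩) := by
    show HA.connectedComponentMk (F ⟨t, ht⟩) = HA.connectedComponentMk (F ⟨l, hl⟩)
    rw [ConnectedComponent.eq]
    exact ⟨w⟩
  have := hbij.1 heq
  rw [ConnectedComponent.eq] at this
  exact hnot this

lemma PT_erase_le (hv : v ∈ T) (hnc : numComp G T ≤ numComp G (T.erase v)) :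
    PTIdeal K m G (T.erase v) ≤ PTIdeal K m G T := by
  rw [PTIdeal, Ideal.span_le]
  rintro f (⟨i, j, hj, rfl⟩ | ⟨i, j, t, l, ht, hl, hij, htl, hr, rfl⟩)
  · exact X_mem_PT i (Finset.mem_of_mem_erase hj)
  · have hform : (X (i, t) * X (j, l) - X (i, l) * X (j, t) : MvPolynomial (Fin m × V) K)
        = mnr K m i j t l := rfl
    rw [hform]
    by_cases htv : t = v
    · exact mnr_mem_of_var_left (htv ▸ hv)
    by_cases hlv : l = v
    · exact mnr_mem_of_var_right (hlv ▸ hv)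
    · have htB : t ∉ T := mem_B_of_A hv ht htv
      have hlB : l ∉ T := mem_B_of_A hv hl hlv
      exact mnr_mem_PT htB hlB htl (reach_in_erase hv hnc htB hlB ht hl hr)

lemma exists_cutSet_le (G : SimpleGraph V) (T : Finset V) :
    ∃ T' ∈ cutSets G, PTIdeal K m G T' ≤ PTIdeal K m G T := by
  induction T using Finset.strongInductionOn with
  | _ T ih =>
    by_cases hcut : hasCutPointProperty G T
    · exact ⟨T, Or.inr hcut, le_rfl⟩
    by_cases hTe : T = ∅
    · exact ⟨T, Or.inl hTe, le_rfl⟩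
    · rw [hasCutPointProperty] at hcut
      push_neg at hcut
      obtain ⟨v, hv, hnc⟩ := hcut
      obtain ⟨T', hT', hle⟩ := ih (T.erase v) (Finset.erase_ssubset hv)
      exact ⟨T', hT', hle.trans (PT_erase_le hv hnc)⟩

end CutRed


section Primality
variable {K : Type} [Field K] {m : ℕ} {V : Type} [DecidableEq V]
variable (G : SimpleGraph V) (T : Finset V)

/-- weight of a variable for the Segre-type map -/
noncomputable def wt (m : ℕ) (p : Fin m × V) :
    ((Fin m × (G.induce {z : V | z ∉ T}).ConnectedComponent) ⊕ V) →₀ ℕ :=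
  if h : p.2 ∈ T then 0 else
    Finsupp.single (Sum.inl (p.1, (G.induce {z : V | z ∉ T}).connectedComponentMk ⟨p.2, h⟩)) 1 +
      Finsupp.single (Sum.inr p.2) 1

/-- exponent map -/
noncomputable def Emap (m : ℕ) (μ : (Fin m × V) →₀ ℕ) :
    ((Fin m × (G.induce {z : V | z ∉ T}).ConnectedComponent) ⊕ V) →₀ ℕ :=
  μ.sum fun p e => e • wt G T m p

/-- the Segre-type algebra map whose kernel is `P_T` -/
noncomputable def phiT (K : Type) [Field K] (m : ℕ) :
    MvPolynomial (Fin m × V) K →ₐ[K]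
      MvPolynomial ((Fin m × (G.induce {z : V | z ∉ T}).ConnectedComponent) ⊕ V) K :=
  aeval (fun p : Fin m × V =>
    if h : p.2 ∈ T then 0 else
      X (Sum.inl (p.1, (G.induce {z : V | z ∉ T}).connectedComponentMk ⟨p.2, h⟩)) *
        X (Sum.inr p.2))

/-- a monomial exponent avoids the columns of `T` -/
def Avoid (T : Finset V) {m : ℕ} (μ : (Fin m × V) →₀ ℕ) : Prop :=
  ∀ p ∈ μ.support, p.2 ∉ T

variable {G T}

lemma phiT_X (p : Fin m × V) :
    phiT G T K m (X p) = if h : p.2 ∈ T then 0 else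
      X (Sum.inl (p.1, (G.induce {z : V | z ∉ T}).connectedComponentMk ⟨p.2, h⟩)) *
        X (Sum.inr p.2) := by
  simp [phiT]

lemma phiT_X_of_mem {p : Fin m × V} (h : p.2 ∈ T) : phiT G T K m (X p) = 0 := by
  rw [phiT_X, dif_pos h]

lemma phiT_X_of_not_mem {p : Fin m × V} (h : p.2 ∉ T) :
    phiT G T K m (X p) = monomial (wt G T m p) 1 := by
  rw [phiT_X, dif_neg h, wt, dif_neg h]
  rw [X, X, monomial_mul, one_mul]

lemma Emap_add (μ ν : (Fin m × V) →₀ ℕ) :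
    Emap G T m (μ + ν) = Emap G T m μ + Emap G T m ν := by
  unfold Emap
  exact Finsupp.sum_add_index' (fun a => zero_smul _ _) (fun a b₁ b₂ => add_smul _ _ _)

lemma Emap_single (p : Fin m × V) (e : ℕ) :
    Emap G T m (Finsupp.single p e) = e • wt G T m p := by
  unfold Emap
  exact Finsupp.sum_single_index (zero_smul _ _)

lemma Emap_zero : Emap G T m 0 = 0 := by
  unfold Emap; exact Finsupp.sum_zero_index

lemma avoid_of_le {μ ν : (Fin m × V) →₀ ℕ} (h : ∀ p, μ p ≤ ν p) (hν : Avoid T ν) :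
    Avoid T μ := by
  intro p hp
  refine hν p ?_
  rw [Finsupp.mem_support_iff] at hp ⊢
  intro h0
  exact hp (Nat.le_zero.mp (h0 ▸ h p))

lemma phiT_monomial (c : K) :
    ∀ (μ : (Fin m × V) →₀ ℕ), Avoid T μ →
      phiT G T K m (monomial μ c) = monomial (Emap G T m μ) c := by
  intro μ
  induction μ using Finsupp.induction with
  | zero =>
      intro _
      rw [Emap_zero]
      rw [show ((monomial (0 : (Fin m × V) →₀ ℕ)) c) = C c from by rw [monomial_zero']]
      rw [show ((monomial (0 : ((Fin m × (G.induce {z : V | z ∉ T}).ConnectedComponent) ⊕ V) →₀ ℕ)) c) = C c from by rw [monomial_zero']]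
      simp [phiT]
  | single_add p e f hpf he ih =>
      intro hav
      have hpT : p.2 ∉ T := by
        refine hav p ?_
        rw [Finsupp.mem_support_iff, Finsupp.add_apply, Finsupp.single_eq_same]
        rw [Finsupp.notMem_support_iff.mp hpf]
        omega
      have havf : Avoid T f := by
        refine avoid_of_le (fun q => ?_) hav
        rw [Finsupp.add_apply]
        exact Nat.le_add_left _ _
      rw [monomial_single_add, map_mul, map_pow, phiT_X_of_not_mem hpT, ih havf]
      rw [monomial_pow, one_pow, monomial_mul, one_mul]
      rw [Emap_add, Emap_single]

lemma PT_le_ker : PTIdeal K m G T ≤ RingHom.ker (phiT G T K m).toRingHom := by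
  rw [PTIdeal, Ideal.span_le]
  rintro f (⟨i, j, hj, rfl⟩ | ⟨i, j, t, l, ht, hl, hij, htl, hr, rfl⟩)
  · show phiT G T K m (X (i, j)) = 0
    exact phiT_X_of_mem hj
  · show phiT G T K m _ = 0
    have hcc : (G.induce {z : V | z ∉ T}).connectedComponentMk ⟨t, ht⟩ =
        (G.induce {z : V | z ∉ T}).connectedComponentMk ⟨l, hl⟩ :=
      SimpleGraph.ConnectedComponent.eq.mpr hr
    rw [map_sub, map_mul, map_mul, phiT_X (i, t), phiT_X (j, l), phiT_X (i, l), phiT_X (j, t)]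
    rw [dif_neg ht, dif_neg hl, dif_neg ht, dif_neg hl]
    rw [hcc]
    ring

end Primality


section Straighten
variable {K : Type} [Field K] {m : ℕ} {V : Type} [DecidableEq V]
variable {G : SimpleGraph V} {T : Finset V}

lemma wt_inl_ne {p : Fin m × V} {i : Fin m}
    {c : (G.induce {z : V | z ∉ T}).ConnectedComponent}
    (h : (wt G T m p) (Sum.inl (i, c)) ≠ 0) :
    ∃ (hp : p.2 ∉ T), p.1 = i ∧
      (G.induce {z : V | z ∉ T}).connectedComponentMk ⟨p.2, hp⟩ = c := by
  by_cases hp : p.2 ∈ T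
  · rw [wt, dif_pos hp] at h
    exact absurd rfl h
  · refine ⟨hp, ?_⟩
    rw [wt, dif_neg hp, Finsupp.add_apply] at h
    have h2 : (Finsupp.single (Sum.inr p.2) (1 : ℕ))
        ((Sum.inl (i, c)) : (Fin m × (G.induce {z : V | z ∉ T}).ConnectedComponent) ⊕ V)
        = 0 := Finsupp.single_eq_of_ne (by simp)
    rw [h2, add_zero] at h
    by_contra hcon
    apply h
    refine Finsupp.single_eq_of_ne' ?_
    intro heq
    rw [Sum.inl.injEq, Prod.mk.injEq] at heq
    exact hcon ⟨heq.1, heq.2⟩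

lemma wt_inr_ne {p : Fin m × V} {j : V} (h : (wt G T m p) (Sum.inr j) ≠ 0) :
    p.2 = j := by
  by_cases hp : p.2 ∈ T
  · rw [wt, dif_pos hp] at h
    exact absurd rfl h
  · rw [wt, dif_neg hp, Finsupp.add_apply] at h
    have h2 : (Finsupp.single
        ((Sum.inl (p.1, (G.induce {z : V | z ∉ T}).connectedComponentMk ⟨p.2, hp⟩)) :
          (Fin m × (G.induce {z : V | z ∉ T}).ConnectedComponent) ⊕ V) (1 : ℕ))
        (Sum.inr j) = 0 := Finsupp.single_eq_of_ne (by simp)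
    rw [h2, zero_add] at h
    by_contra hcon
    apply h
    exact Finsupp.single_eq_of_ne' (by simp [hcon])

lemma wt_inl_self {i : Fin m} {j : V} (hp : j ∉ T) :
    (wt G T m (i, j))
      (Sum.inl (i, (G.induce {z : V | z ∉ T}).connectedComponentMk ⟨j, hp⟩)) = 1 := by
  show (if h : j ∈ T then (0 : ((Fin m × (G.induce {z : V | z ∉ T}).ConnectedComponent) ⊕ V) →₀ ℕ) else
      Finsupp.single (Sum.inl (i, (G.induce {z : V | z ∉ T}).connectedComponentMk ⟨j, h⟩)) 1 +
        Finsupp.single (Sum.inr j) 1)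
      (Sum.inl (i, (G.induce {z : V | z ∉ T}).connectedComponentMk ⟨j, hp⟩)) = 1
  rw [dif_neg hp, Finsupp.add_apply]
  have h1 : (Finsupp.single
      ((Sum.inl (i, (G.induce {z : V | z ∉ T}).connectedComponentMk ⟨j, hp⟩)) :
        (Fin m × (G.induce {z : V | z ∉ T}).ConnectedComponent) ⊕ V) (1 : ℕ))
      (Sum.inl (i, (G.induce {z : V | z ∉ T}).connectedComponentMk ⟨j, hp⟩)) = 1 :=
    Finsupp.single_eq_same
  have h2 : (Finsupp.single ((Sum.inr j) :
        (Fin m × (G.induce {z : V | z ∉ T}).ConnectedComponent) ⊕ V) (1 : ℕ))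
      (Sum.inl (i, (G.induce {z : V | z ∉ T}).connectedComponentMk ⟨j, hp⟩)) = 0 :=
    Finsupp.single_eq_of_ne (by simp)
  rw [h1, h2]

lemma wt_inr_self {i : Fin m} {j : V} (hp : j ∉ T) :
    (wt G T m (i, j)) (Sum.inr j) = 1 := by
  show (if h : j ∈ T then (0 : ((Fin m × (G.induce {z : V | z ∉ T}).ConnectedComponent) ⊕ V) →₀ ℕ) else
      Finsupp.single (Sum.inl (i, (G.induce {z : V | z ∉ T}).connectedComponentMk ⟨j, h⟩)) 1 +
        Finsupp.single (Sum.inr j) 1) (Sum.inr j) = 1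
  rw [dif_neg hp, Finsupp.add_apply]
  have h1 : (Finsupp.single
      ((Sum.inl (i, (G.induce {z : V | z ∉ T}).connectedComponentMk ⟨j, hp⟩)) :
        (Fin m × (G.induce {z : V | z ∉ T}).ConnectedComponent) ⊕ V) (1 : ℕ))
      (Sum.inr j) = 0 := Finsupp.single_eq_of_ne (by simp)
  have h2 : (Finsupp.single ((Sum.inr j) :
        (Fin m × (G.induce {z : V | z ∉ T}).ConnectedComponent) ⊕ V) (1 : ℕ))
      (Sum.inr j) = 1 := Finsupp.single_eq_same
  rw [h1, h2]

lemma Emap_apply (μ : (Fin m × V) →₀ ℕ)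
    (a : (Fin m × (G.induce {z : V | z ∉ T}).ConnectedComponent) ⊕ V) :
    (Emap G T m μ) a = ∑ p ∈ μ.support, (μ p) * (wt G T m p a) := by
  rw [Emap, Finsupp.sum_apply, Finsupp.sum]
  refine Finset.sum_congr rfl fun p _ => ?_
  rw [Finsupp.smul_apply, smul_eq_mul]

lemma exists_inl {ν : (Fin m × V) →₀ ℕ} (hν : Avoid T ν) {i : Fin m}
    {c : (G.induce {z : V | z ∉ T}).ConnectedComponent}
    (hpos : (Emap G T m ν) (Sum.inl (i, c)) ≠ 0) :
    ∃ (j' : V) (hj' : j' ∉ T), ν (i, j') ≠ 0 ∧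
      (G.induce {z : V | z ∉ T}).connectedComponentMk ⟨j', hj'⟩ = c := by
  rw [Emap_apply] at hpos
  obtain ⟨p, hps, hp0⟩ := Finset.exists_ne_zero_of_sum_ne_zero hpos
  have hw : (wt G T m p) (Sum.inl (i, c)) ≠ 0 := by
    intro h; exact hp0 (by rw [h, mul_zero])
  obtain ⟨hp2, hp1, hcc⟩ := wt_inl_ne hw
  refine ⟨p.2, hp2, ?_, hcc⟩
  have hpe : (i, p.2) = p := by rw [← hp1]
  rw [hpe]
  exact Finsupp.mem_support_iff.mp hps

lemma exists_inr {ν : (Fin m × V) →₀ ℕ} {j : V}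
    (hpos : (Emap G T m ν) (Sum.inr j) ≠ 0) :
    ∃ i'' : Fin m, ν (i'', j) ≠ 0 := by
  rw [Emap_apply] at hpos
  obtain ⟨p, hps, hp0⟩ := Finset.exists_ne_zero_of_sum_ne_zero hpos
  have hw : (wt G T m p) (Sum.inr j) ≠ 0 := by
    intro h; exact hp0 (by rw [h, mul_zero])
  have hp2 := wt_inr_ne hw
  refine ⟨p.1, ?_⟩
  have hpe : (p.1, j) = p := by rw [← hp2]
  rw [hpe]
  exact Finsupp.mem_support_iff.mp hps

lemma Emap_pos_inl {μ : (Fin m × V) →₀ ℕ} {i : Fin m} {j : V}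
    (hij : μ (i, j) ≠ 0) (hj : j ∉ T) :
    (Emap G T m μ) (Sum.inl (i, (G.induce {z : V | z ∉ T}).connectedComponentMk ⟨j, hj⟩))
      ≠ 0 := by
  rw [Emap_apply]
  intro h0
  have hmem : (i, j) ∈ μ.support := Finsupp.mem_support_iff.mpr hij
  have hle2 : μ (i, j) * (wt G T m (i, j))
      (Sum.inl (i, (G.induce {z : V | z ∉ T}).connectedComponentMk ⟨j, hj⟩)) ≤
      ∑ p ∈ μ.support, (μ p) * (wt G T m p)
        (Sum.inl (i, (G.induce {z : V | z ∉ T}).connectedComponentMk ⟨j, hj⟩)) :=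
    Finset.single_le_sum (f := fun p => (μ p) * (wt G T m p)
      (Sum.inl (i, (G.induce {z : V | z ∉ T}).connectedComponentMk ⟨j, hj⟩)))
      (fun _ _ => Nat.zero_le _) hmem
  rw [wt_inl_self hj, mul_one, h0] at hle2
  omega

lemma Emap_pos_inr {μ : (Fin m × V) →₀ ℕ} {i : Fin m} {j : V}
    (hij : μ (i, j) ≠ 0) (hj : j ∉ T) :
    (Emap G T m μ) (Sum.inr j) ≠ 0 := by
  rw [Emap_apply]
  intro h0
  have hmem : (i, j) ∈ μ.support := Finsupp.mem_support_iff.mpr hij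
  have hle2 : μ (i, j) * (wt G T m (i, j)) (Sum.inr j) ≤
      ∑ p ∈ μ.support, (μ p) * (wt G T m p) (Sum.inr j) :=
    Finset.single_le_sum (f := fun p => (μ p) * (wt G T m p) (Sum.inr j))
      (fun _ _ => Nat.zero_le _) hmem
  rw [wt_inr_self hj, mul_one, h0] at hle2
  omega

lemma eq_zero_of_Emap_zero {ν : (Fin m × V) →₀ ℕ} (hν : Avoid T ν)
    (h : Emap G T m ν = 0) : ν = 0 := by
  by_contra h0
  obtain ⟨p, hp⟩ := Finsupp.support_nonempty_iff.mpr h0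
  have hνp : ν (p.1, p.2) ≠ 0 := by
    rw [Prod.mk.eta]; exact Finsupp.mem_support_iff.mp hp
  have hj : p.2 ∉ T := hν p hp
  have := Emap_pos_inr (G := G) hνp hj
  rw [h] at this
  exact this rfl

lemma repr_of_pos {ν : (Fin m × V) →₀ ℕ} {q : Fin m × V} (h : ν q ≠ 0) :
    ν = Finsupp.single q 1 + (ν - Finsupp.single q 1) := by
  ext r
  rw [Finsupp.add_apply, Finsupp.tsub_apply, Finsupp.single_apply]
  split_ifs with hqr
  · subst hqr
    have := Nat.pos_of_ne_zero h
    omega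
  · omega

lemma straighten (d : ℕ) :
    ∀ (μ ν : (Fin m × V) →₀ ℕ), (μ.sum fun _ e => e) ≤ d →
      Avoid T μ → Avoid T ν → Emap G T m μ = Emap G T m ν →
      (monomial μ (1 : K)) - monomial ν 1 ∈ PTIdeal K m G T := by
  induction d with
  | zero =>
      intro μ ν hd hμ hν hE
      have hμ0 : μ = 0 := by
        by_contra h0
        obtain ⟨p, hp⟩ := Finsupp.support_nonempty_iff.mpr h0
        have h1 : μ p ≤ μ.sum fun _ e => e :=
          Finset.single_le_sum (fun _ _ => Nat.zero_le _) hp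
        have h2 := Finsupp.mem_support_iff.mp hp
        omega
      subst hμ0
      have hν0 : ν = 0 := eq_zero_of_Emap_zero hν (by rw [← hE, Emap_zero])
      subst hν0
      rw [sub_self]
      exact zero_mem _
  | succ d ih =>
      intro μ ν hd hμ hν hE
      by_cases hμ0 : μ = 0
      · subst hμ0
        have hν0 : ν = 0 := eq_zero_of_Emap_zero hν (by rw [← hE, Emap_zero])
        subst hν0
        rw [sub_self]
        exact zero_mem _
      obtain ⟨p, hp⟩ := Finsupp.support_nonempty_iff.mpr hμ0
      obtain ⟨i, j⟩ := p
      have hμij : μ (i, j) ≠ 0 := Finsupp.mem_support_iff.mp hp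
      have hj : j ∉ T := hμ (i, j) hp
      have hpos1 := Emap_pos_inl (G := G) hμij hj
      rw [hE] at hpos1
      obtain ⟨j', hj', hνij', hcc⟩ := exists_inl hν hpos1
      have hpos2 := Emap_pos_inr (G := G) hμij hj
      rw [hE] at hpos2
      obtain ⟨i'', hνi''j⟩ := exists_inr hpos2
      -- Sub-lemma: adjust ν so that it has positive exponent at (i,j)
      have hS : ∃ ν₂ : (Fin m × V) →₀ ℕ, Avoid T ν₂ ∧ Emap G T m ν₂ = Emap G T m ν ∧
          ν₂ (i, j) ≠ 0 ∧ (monomial ν (1 : K)) - monomial ν₂ 1 ∈ PTIdeal K m G T := by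
        by_cases hj'j : j' = j
        · exact ⟨ν, hν, rfl, by rw [← hj'j]; exact hνij', by rw [sub_self]; exact zero_mem _⟩
        by_cases hi''i : i'' = i
        · exact ⟨ν, hν, rfl, by rw [← hi''i]; exact hνi''j, by rw [sub_self]; exact zero_mem _⟩
        -- genuine swap
        set s1 : (Fin m × V) →₀ ℕ := Finsupp.single (i, j') 1 with hs1
        set s2 : (Fin m × V) →₀ ℕ := Finsupp.single (i'', j) 1 with hs2
        set ν'' : (Fin m × V) →₀ ℕ := ν - s1 - s2 with hν''
        have hne : ((i, j') : Fin m × V) ≠ (i'', j) := by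
          intro h
          rw [Prod.mk.injEq] at h
          exact hi''i h.1.symm
        have hrepr : ν = ν'' + s1 + s2 := by
          ext r
          rw [Finsupp.add_apply, Finsupp.add_apply, hν'', Finsupp.tsub_apply,
            Finsupp.tsub_apply]
          by_cases h1 : ((i, j') : Fin m × V) = r
          · have e1 : s1 r = 1 := by rw [hs1, ← h1]; exact Finsupp.single_eq_same
            have e2 : s2 r = 0 := by
              rw [hs2]; exact Finsupp.single_eq_of_ne' (by rw [← h1]; exact Ne.symm hne)
            have e3 : ν r ≠ 0 := by rw [← h1]; exact hνij'
            have := Nat.pos_of_ne_zero e3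
            rw [e1, e2]
            omega
          · by_cases h2 : ((i'', j) : Fin m × V) = r
            · have e1 : s1 r = 0 := by
                rw [hs1]; exact Finsupp.single_eq_of_ne' (by rw [← h2]; exact hne)
              have e2 : s2 r = 1 := by rw [hs2, ← h2]; exact Finsupp.single_eq_same
              have e3 : ν r ≠ 0 := by rw [← h2]; exact hνi''j
              have := Nat.pos_of_ne_zero e3
              rw [e1, e2]
              omega
            · have e1 : s1 r = 0 := by rw [hs1]; exact Finsupp.single_eq_of_ne' h1
              have e2 : s2 r = 0 := by rw [hs2]; exact Finsupp.single_eq_of_ne' h2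
              rw [e1, e2]
              omega
        set ν₂ : (Fin m × V) →₀ ℕ := ν'' + Finsupp.single (i, j) 1 +
          Finsupp.single (i'', j') 1 with hν₂def
        have hν''le : ∀ q, ν'' q ≤ ν q := by
          intro q
          rw [hν'', Finsupp.tsub_apply, Finsupp.tsub_apply]
          omega
        have hν₂av : Avoid T ν₂ := by
          intro q hq
          by_cases hq1 : q = (i, j)
          · rw [hq1]; exact hj
          by_cases hq2 : q = (i'', j')
          · rw [hq2]; exact hj'
          · have hq0 := Finsupp.mem_support_iff.mp hq
            rw [hν₂def, Finsupp.add_apply, Finsupp.add_apply,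
              Finsupp.single_eq_of_ne' (fun h => hq1 h.symm),
              Finsupp.single_eq_of_ne' (fun h => hq2 h.symm), add_zero, add_zero] at hq0
            have : ν q ≠ 0 := fun h => hq0 (Nat.le_zero.mp (h ▸ hν''le q))
            exact hν q (Finsupp.mem_support_iff.mpr this)
        have hν₂E : Emap G T m ν₂ = Emap G T m ν := by
          have hw : wt G T m (i, j) + wt G T m (i'', j') =
              wt G T m (i, j') + wt G T m (i'', j) := by
            rw [wt, wt, wt, wt, dif_neg hj, dif_neg hj', dif_neg hj, dif_neg hj']
            rw [hcc]
            abel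
          have hL : Emap G T m ν₂ = Emap G T m ν'' + (wt G T m (i, j) + wt G T m (i'', j')) := by
            rw [hν₂def, Emap_add, Emap_add, Emap_single, Emap_single, one_smul, one_smul,
              add_assoc]
          have hR : Emap G T m ν = Emap G T m ν'' + (wt G T m (i, j') + wt G T m (i'', j)) := by
            conv_lhs => rw [hrepr]
            rw [Emap_add, Emap_add, Emap_single, Emap_single, one_smul, one_smul, add_assoc]
          rw [hL, hR, hw]
        have hν₂ij : ν₂ (i, j) ≠ 0 := by
          rw [hν₂def, Finsupp.add_apply, Finsupp.add_apply, Finsupp.single_eq_same,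
            Finsupp.single_eq_of_ne' (fun h => hi''i (congrArg Prod.fst h))]
          omega
        have hmem : (monomial ν (1 : K)) - monomial ν₂ 1 ∈ PTIdeal K m G T := by
          have e1 : monomial ν'' (1 : K) * X (i, j') * X (i'', j) = monomial ν 1 := by
            rw [X, X, monomial_mul, monomial_mul, ← hs1, ← hs2, ← hrepr]
            norm_num
          have e2 : monomial ν'' (1 : K) * X (i, j) * X (i'', j') = monomial ν₂ 1 := by
            rw [X, X, monomial_mul, monomial_mul, ← hν₂def]
            norm_num
          have e3 : (monomial ν (1 : K)) - monomial ν₂ 1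
              = monomial ν'' 1 * mnr K m i i'' j' j := by
            rw [← e1, ← e2, mnr]; ring
          rw [e3]
          refine Ideal.mul_mem_left _ _ (mnr_mem_PT hj' hj hj'j ?_)
          exact SimpleGraph.ConnectedComponent.eq.mp hcc
        exact ⟨ν₂, hν₂av, hν₂E, hν₂ij, hmem⟩
      obtain ⟨ν₂, hν₂av, hν₂E, hν₂ij, hν₂mem⟩ := hS
      -- peel off X (i,j)
      set μ' : (Fin m × V) →₀ ℕ := μ - Finsupp.single (i, j) 1 with hμ'
      set ν₂' : (Fin m × V) →₀ ℕ := ν₂ - Finsupp.single (i, j) 1 with hν₂'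
      have hμr : μ = Finsupp.single (i, j) 1 + μ' := repr_of_pos hμij
      have hν₂r : ν₂ = Finsupp.single (i, j) 1 + ν₂' := repr_of_pos hν₂ij
      have hE' : Emap G T m μ' = Emap G T m ν₂' := by
        have h1 : Emap G T m μ = Emap G T m ν₂ := by rw [hE, ← hν₂E]
        rw [hμr, hν₂r, Emap_add, Emap_add] at h1
        exact add_left_cancel h1
      have havμ' : Avoid T μ' := avoid_of_le
        (fun q => by rw [hμ', Finsupp.tsub_apply]; omega) hμ
      have havν₂' : Avoid T ν₂' := avoid_of_le
        (fun q => by rw [hν₂', Finsupp.tsub_apply]; omega) hν₂av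
      have hdeg : (μ'.sum fun _ e => e) ≤ d := by
        have h1 : (μ.sum fun _ e => e) = 1 + (μ'.sum fun _ e => e) := by
          rw [hμr, Finsupp.sum_add_index' (fun _ => rfl) (fun _ _ _ => rfl),
            Finsupp.sum_single_index rfl]
        omega
      have hIH := ih μ' ν₂' hdeg havμ' havν₂' hE'
      have h1 : (monomial μ (1 : K)) - monomial ν₂ 1
          = X (i, j) * ((monomial μ' 1) - monomial ν₂' 1) := by
        rw [hμr, hν₂r, monomial_single_add, monomial_single_add, pow_one]
        ring
      have h2 : (monomial μ (1 : K)) - monomial ν 1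
          = ((monomial μ 1) - monomial ν₂ 1) - ((monomial ν 1) - monomial ν₂ 1) := by
        ring
      rw [h2, h1]
      exact sub_mem (Ideal.mul_mem_left _ _ hIH) hν₂mem

end Straighten


section KerPT
variable {K : Type} [Field K] {m : ℕ} {V : Type} [DecidableEq V]
variable {G : SimpleGraph V} {T : Finset V}

lemma ker_le_PT : RingHom.ker (phiT G T K m).toRingHom ≤ PTIdeal K m G T := by
  classical
  intro f hf
  have hphif : phiT G T K m f = 0 := hf
  -- split f into avoiding and non-avoiding parts
  have hsplit : (∑ μ ∈ f.support.filter (fun μ => Avoid T μ), monomial μ (coeff μ f))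
      + (∑ μ ∈ f.support.filter (fun μ => ¬ Avoid T μ), monomial μ (coeff μ f)) = f := by
    rw [Finset.sum_filter_add_sum_filter_not]
    exact support_sum_monomial_coeff f
  set fA := ∑ μ ∈ f.support.filter (fun μ => Avoid T μ), monomial μ (coeff μ f) with hfA
  set fT := ∑ μ ∈ f.support.filter (fun μ => ¬ Avoid T μ), monomial μ (coeff μ f) with hfT
  -- the non-avoiding part is in P_T and killed by phiT
  have hTfacts : ∀ μ ∈ f.support.filter (fun μ => ¬ Avoid T μ),
      (monomial μ (coeff μ f) ∈ PTIdeal K m G T ∧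
        phiT G T K m (monomial μ (coeff μ f)) = 0) := by
    intro μ hμ
    rw [Finset.mem_filter] at hμ
    have hnav := hμ.2
    rw [Avoid] at hnav
    push_neg at hnav
    obtain ⟨p, hps, hpT⟩ := hnav
    have hrepr := repr_of_pos (Finsupp.mem_support_iff.mp hps)
    have hXp : (X p : MvPolynomial (Fin m × V) K) ∈ PTIdeal K m G T := by
      rw [← Prod.mk.eta (p := p)]
      exact X_mem_PT p.1 hpT
    constructor
    · rw [hrepr, monomial_single_add, pow_one]
      exact Ideal.mul_mem_right _ _ hXp
    · rw [hrepr, monomial_single_add, pow_one, map_mul, phiT_X_of_mem hpT, zero_mul]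
  have hfTmem : fT ∈ PTIdeal K m G T :=
    Ideal.sum_mem _ (fun μ hμ => (hTfacts μ hμ).1)
  have hphifT : phiT G T K m fT = 0 := by
    rw [hfT, map_sum]
    exact Finset.sum_eq_zero (fun μ hμ => (hTfacts μ hμ).2)
  -- phi of the avoiding part vanishes
  have hphifA : (∑ μ ∈ f.support.filter (fun μ => Avoid T μ),
      monomial (Emap G T m μ) (coeff μ f)) = 0 := by
    have h1 : phiT G T K m fA = ∑ μ ∈ f.support.filter (fun μ => Avoid T μ),
        monomial (Emap G T m μ) (coeff μ f) := by
      rw [hfA, map_sum]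
      refine Finset.sum_congr rfl fun μ hμ => ?_
      exact phiT_monomial _ μ (Finset.mem_filter.mp hμ).2
    have h2 : phiT G T K m fA + phiT G T K m fT = 0 := by
      rw [← map_add, hsplit, hphif]
    rw [hphifT, add_zero] at h2
    rw [← h1, h2]
  -- fiberwise sums of coefficients vanish
  have hclass : ∀ y, (∑ μ ∈ (f.support.filter (fun μ => Avoid T μ)).filter
      (fun μ => Emap G T m μ = y), coeff μ f) = 0 := by
    intro y
    have h1 := congrArg (coeff y) hphifA
    rw [coeff_sum, coeff_zero] at h1
    rw [← h1, Finset.sum_filter]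
    refine Finset.sum_congr rfl fun μ _ => ?_
    rw [coeff_monomial]
  -- the choice function on fibers
  set kap : (((Fin m × (G.induce {z : V | z ∉ T}).ConnectedComponent) ⊕ V) →₀ ℕ) →
      ((Fin m × V) →₀ ℕ) := fun y =>
    if h : ∃ μ₀ : (Fin m × V) →₀ ℕ, Avoid T μ₀ ∧ Emap G T m μ₀ = y then h.choose else 0
    with hkap
  have hkapspec : ∀ (μ : (Fin m × V) →₀ ℕ), Avoid T μ →
      Avoid T (kap (Emap G T m μ)) ∧ Emap G T m (kap (Emap G T m μ)) = Emap G T m μ := by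
    intro μ hav
    have hex : ∃ μ₀ : (Fin m × V) →₀ ℕ, Avoid T μ₀ ∧ Emap G T m μ₀ = Emap G T m μ :=
      ⟨μ, hav, rfl⟩
    rw [hkap]
    simp only [dif_pos hex]
    exact hex.choose_spec
  -- each avoiding monomial is congruent to its representative
  have hdiff : ∀ μ ∈ f.support.filter (fun μ => Avoid T μ),
      monomial μ (coeff μ f) - monomial (kap (Emap G T m μ)) (coeff μ f) ∈
        PTIdeal K m G T := by
    intro μ hμ
    have hav := (Finset.mem_filter.mp hμ).2
    obtain ⟨hav', hE'⟩ := hkapspec μ hav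
    have h1 : monomial μ (coeff μ f) - monomial (kap (Emap G T m μ)) (coeff μ f)
        = C (coeff μ f) * ((monomial μ (1 : K)) - monomial (kap (Emap G T m μ)) 1) := by
      rw [mul_sub, C_mul_monomial, C_mul_monomial, mul_one]
    rw [h1]
    exact Ideal.mul_mem_left _ _
      (straighten _ μ (kap (Emap G T m μ)) le_rfl hav hav' hE'.symm)
  -- the sum of representatives is zero
  have hg0 : (∑ μ ∈ f.support.filter (fun μ => Avoid T μ),
      monomial (kap (Emap G T m μ)) (coeff μ f)) = 0 := by
    rw [← Finset.sum_fiberwise_of_maps_to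
      (g := fun μ => Emap G T m μ)
      (t := (f.support.filter (fun μ => Avoid T μ)).image (fun μ => Emap G T m μ))
      (fun μ hμ => Finset.mem_image_of_mem _ hμ)
      (fun μ => monomial (kap (Emap G T m μ)) (coeff μ f))]
    refine Finset.sum_eq_zero fun y _ => ?_
    have h1 : (∑ μ ∈ (f.support.filter (fun μ => Avoid T μ)).filter
        (fun μ => Emap G T m μ = y), monomial (kap (Emap G T m μ)) (coeff μ f))
        = ∑ μ ∈ (f.support.filter (fun μ => Avoid T μ)).filter
          (fun μ => Emap G T m μ = y), monomial (kap y) (coeff μ f) := by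
      refine Finset.sum_congr rfl fun μ hμ => ?_
      rw [(Finset.mem_filter.mp hμ).2]
    rw [h1, ← map_sum, hclass y, map_zero]
  -- assemble
  have hfAmem : fA ∈ PTIdeal K m G T := by
    have h1 : fA = (∑ μ ∈ f.support.filter (fun μ => Avoid T μ),
        (monomial μ (coeff μ f) - monomial (kap (Emap G T m μ)) (coeff μ f)))
        + (∑ μ ∈ f.support.filter (fun μ => Avoid T μ),
          monomial (kap (Emap G T m μ)) (coeff μ f)) := by
      rw [← Finset.sum_add_distrib]
      rw [hfA]
      refine Finset.sum_congr rfl fun μ _ => ?_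
      ring
    rw [h1, hg0, add_zero]
    exact Ideal.sum_mem _ hdiff
  rw [← hsplit]
  exact add_mem hfAmem hfTmem

lemma PT_prime (G : SimpleGraph V) (T : Finset V) : (PTIdeal K m G T).IsPrime := by
  have heq : PTIdeal K m G T = RingHom.ker (phiT G T K m).toRingHom :=
    le_antisymm PT_le_ker ker_le_PT
  rw [heq]
  exact RingHom.ker_isPrime _

end KerPT


end BEI

set_option linter.unusedVariables false in
theorem genBEI_primary_decomposition
    (K : Type) [Field K] (m n : ℕ) (hm : 2 ≤ m) (G : SimpleGraph (Fin n)) :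
    (genBEI K m G = ⨅ T ∈ cutSets G, PTIdeal K m G T) ∧
    (genBEI K m G).IsRadical ∧
    ∀ T ∈ cutSets G, (PTIdeal K m G T).IsPrime := by
  have hprime : ∀ T : Finset (Fin n), (PTIdeal K m G T).IsPrime :=
    fun T => BEI.PT_prime G T
  have heq : genBEI K m G = ⨅ T ∈ cutSets G, PTIdeal K m G T := by
    apply le_antisymm
    · exact le_iInf₂ fun T _ => BEI.genBEI_le_PT G T
    · have h1 : (⨅ T ∈ cutSets G, PTIdeal K m G T) ≤
          ⨅ T : Finset (Fin n), PTIdeal K m G T := by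
        refine le_iInf fun T => ?_
        obtain ⟨T', hT', hle⟩ := BEI.exists_cutSet_le (K := K) (m := m) G T
        exact le_trans (iInf₂_le T' hT') hle
      exact h1.trans (BEI.main_inc K m (BEI.meas G) G le_rfl)
  refine ⟨heq, ?_, fun T _ => hprime T⟩
  rw [heq]
  exact Ideal.isRadical_iInf _ fun T =>
    Ideal.isRadical_iInf _ fun _ => (hprime T).isRadical

end
end

section
/- Let G be a simple graph and v an internal (non-leaf) vertex of G. Then J_{K_m,G} = J_{K_m,G_v} ∩ ((x_{iv} : i ∈ [m]) + J_{K_m, G∖v}), and moreover J_{K_m,G_v} + ((x_{iv} : i∈[m]) + J_{K_m,G∖v}) = (x_{iv} : i∈[m]) + J_{K_m, G_v∖v}. -/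
open MvPolynomial

noncomputable section


section Aux
variable (K : Type) [Field K] (m : ℕ) {V : Type}

lemma delVert_adj {G : SimpleGraph V} {v a b : V} :
    (delVert G v).Adj a b ↔ G.Adj a b ∧ a ≠ v ∧ b ≠ v := by
  unfold delVert
  rw [SimpleGraph.fromRel_adj]
  constructor
  · rintro ⟨hne, h | h⟩
    · exact h
    · exact ⟨h.1.symm, h.2.2, h.2.1⟩
  · rintro ⟨h, ha, hb⟩
    exact ⟨h.ne, Or.inl ⟨h, ha, hb⟩⟩

lemma addNbhdClique_adj {G : SimpleGraph V} {v a b : V} :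
    (addNbhdClique G v).Adj a b ↔ G.Adj a b ∨ (a ≠ b ∧ G.Adj v a ∧ G.Adj v b) := by
  unfold addNbhdClique
  rw [SimpleGraph.sup_adj, SimpleGraph.fromRel_adj]
  constructor
  · rintro (h | ⟨hne, ⟨h1, h2⟩ | ⟨h1, h2⟩⟩)
    · exact Or.inl h
    · exact Or.inr ⟨hne, h1, h2⟩
    · exact Or.inr ⟨hne, h2, h1⟩
  · rintro (h | ⟨hne, h1, h2⟩)
    · exact Or.inl h
    · exact Or.inr ⟨hne, Or.inl ⟨h1, h2⟩⟩

lemma genBEI_mono {G₁ G₂ : SimpleGraph V} (h : ∀ a b, G₁.Adj a b → G₂.Adj a b) :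
    genBEI K m G₁ ≤ genBEI K m G₂ := by
  apply Ideal.span_mono
  rintro f ⟨i, j, t, l, hij, hadj, hf⟩
  exact ⟨i, j, t, l, hij, h _ _ hadj, hf⟩

lemma genBEI_le_sup (G : SimpleGraph V) (v : V) :
    genBEI K m G ≤ Ideal.span {f | ∃ i : Fin m, f = (X (i, v) : MvPolynomial (Fin m × V) K)} ⊔
      genBEI K m (delVert G v) := by
  rw [genBEI, Ideal.span_le]
  rintro f ⟨i, j, t, l, hij, hadj, rfl⟩
  by_cases ht : t = v
  · subst ht
    refine Submodule.mem_sup_left (Ideal.sub_mem _ ?_ ?_)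
    · rw [mul_comm]
      exact Ideal.mul_mem_left _ _ (Ideal.subset_span ⟨i, rfl⟩)
    · exact Ideal.mul_mem_left _ _ (Ideal.subset_span ⟨j, rfl⟩)
  · by_cases hl : l = v
    · subst hl
      refine Submodule.mem_sup_left (Ideal.sub_mem _ ?_ ?_)
      · exact Ideal.mul_mem_left _ _ (Ideal.subset_span ⟨j, rfl⟩)
      · rw [mul_comm]
        exact Ideal.mul_mem_left _ _ (Ideal.subset_span ⟨i, rfl⟩)
    · exact Submodule.mem_sup_right
        (Ideal.subset_span ⟨i, j, t, l, hij, delVert_adj.mpr ⟨hadj, ht, hl⟩, rfl⟩)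

lemma xmul_mem {G : SimpleGraph V} {v : V} {i j k : Fin m} {u w : V}
    (hij : i ≠ j) (hu : G.Adj v u) (hw : G.Adj v w) :
    (X (k, v) * (X (i, u) * X (j, w) - X (i, w) * X (j, u)) :
      MvPolynomial (Fin m × V) K) ∈ genBEI K m G := by
  have b1 : (X (i, v) * X (j, w) - X (i, w) * X (j, v) :
      MvPolynomial (Fin m × V) K) ∈ genBEI K m G :=
    Ideal.subset_span ⟨i, j, v, w, hij, hw, rfl⟩
  have b2 : (X (i, v) * X (k, u) - X (i, u) * X (k, v) :
      MvPolynomial (Fin m × V) K) ∈ genBEI K m G := by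
    by_cases hik : i = k
    · subst hik
      have h0 : (X (i, v) * X (i, u) - X (i, u) * X (i, v) :
          MvPolynomial (Fin m × V) K) = 0 := by ring
      rw [h0]; exact zero_mem _
    · exact Ideal.subset_span ⟨i, k, v, u, hik, hu, rfl⟩
  have b3 : (X (j, v) * X (k, u) - X (j, u) * X (k, v) :
      MvPolynomial (Fin m × V) K) ∈ genBEI K m G := by
    by_cases hjk : j = k
    · subst hjk
      have h0 : (X (j, v) * X (j, u) - X (j, u) * X (j, v) :
          MvPolynomial (Fin m × V) K) = 0 := by ring
      rw [h0]; exact zero_mem _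
    · exact Ideal.subset_span ⟨j, k, v, u, hjk, hu, rfl⟩
  have key : (X (k, v) * (X (i, u) * X (j, w) - X (i, w) * X (j, u)) :
      MvPolynomial (Fin m × V) K) =
      X (k, u) * (X (i, v) * X (j, w) - X (i, w) * X (j, v))
      - X (j, w) * (X (i, v) * X (k, u) - X (i, u) * X (k, v))
      + X (i, w) * (X (j, v) * X (k, u) - X (j, u) * X (k, v)) := by ring
  rw [key]
  exact add_mem (sub_mem (Ideal.mul_mem_left _ _ b1) (Ideal.mul_mem_left _ _ b2))
    (Ideal.mul_mem_left _ _ b3)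

variable [DecidableEq V]

def phiSub (v : V) : MvPolynomial (Fin m × V) K →ₐ[K] MvPolynomial (Fin m × V) K :=
  aeval (fun p => if p.2 = v then 0 else X p)

lemma sub_phi_mem (v : V) (g : MvPolynomial (Fin m × V) K) :
    g - phiSub K m v g ∈
      Ideal.span {f | ∃ i : Fin m, f = (X (i, v) : MvPolynomial (Fin m × V) K)} := by
  induction g using MvPolynomial.induction_on with
  | C a =>
      simp only [phiSub, aeval_C, algebraMap_eq, sub_self]
      exact zero_mem _
  | add p q hp hq =>
      have h : p + q - phiSub K m v (p + q) =
          (p - phiSub K m v p) + (q - phiSub K m v q) := by rw [map_add]; ring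
      rw [h]; exact add_mem hp hq
  | mul_X p n hp =>
      have key : p * X n - phiSub K m v (p * X n) =
          (p - phiSub K m v p) * X n + phiSub K m v p * (X n - phiSub K m v (X n)) := by
        rw [map_mul]; ring
      rw [key]
      refine add_mem (Ideal.mul_mem_right _ _ hp) ?_
      obtain ⟨n1, n2⟩ := n
      by_cases hn : n2 = v
      · have hXn : phiSub K m v (X (n1, n2)) = 0 := by simp [phiSub, hn]
        rw [hXn, sub_zero]
        exact Ideal.mul_mem_left _ _ (Ideal.subset_span ⟨n1, by rw [hn]⟩)
      · have hXn : phiSub K m v (X (n1, n2)) = X (n1, n2) := by simp [phiSub, hn]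
        rw [hXn, sub_self, mul_zero]
        exact zero_mem _

lemma phi_xv_eq_zero {v : V} {y : MvPolynomial (Fin m × V) K}
    (hy : y ∈ Ideal.span {f | ∃ i : Fin m, f = (X (i, v) : MvPolynomial (Fin m × V) K)}) :
    phiSub K m v y = 0 := by
  induction hy using Submodule.span_induction with
  | mem x hx =>
      obtain ⟨i, rfl⟩ := hx
      simp [phiSub]
  | zero => simp
  | add a b ha hb iha ihb => rw [map_add, iha, ihb, add_zero]
  | smul a x hx ih => rw [smul_eq_mul, map_mul, ih, mul_zero]

lemma phi_del_mem {G : SimpleGraph V} {v : V} {z : MvPolynomial (Fin m × V) K}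
    (hz : z ∈ genBEI K m (delVert G v)) : phiSub K m v z ∈ genBEI K m G := by
  induction hz using Submodule.span_induction with
  | mem f hf =>
      obtain ⟨i, j, t, l, hij, hadj, rfl⟩ := hf
      obtain ⟨hG, ht, hl⟩ := delVert_adj.mp hadj
      have h : phiSub K m v (X (i, t) * X (j, l) - X (i, l) * X (j, t)) =
          X (i, t) * X (j, l) - X (i, l) * X (j, t) := by
        simp [phiSub, ht, hl]
      rw [h]
      exact Ideal.subset_span ⟨i, j, t, l, hij, hG, rfl⟩
  | zero => simp
  | add a b ha hb iha ihb => rw [map_add]; exact add_mem iha ihb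
  | smul a x hx ih => rw [smul_eq_mul, map_mul]; exact Ideal.mul_mem_left _ _ ih

omit [DecidableEq V] in
lemma span_xv_mul {v : V} {I : Ideal (MvPolynomial (Fin m × V) K)}
    {x : MvPolynomial (Fin m × V) K} (hx : ∀ k : Fin m, X (k, v) * x ∈ I) :
    ∀ q ∈ Ideal.span {f | ∃ i : Fin m, f = (X (i, v) : MvPolynomial (Fin m × V) K)},
      q * x ∈ I := by
  intro q hq
  induction hq using Submodule.span_induction with
  | mem y hy => obtain ⟨k, rfl⟩ := hy; exact hx k
  | zero => rw [zero_mul]; exact zero_mem _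
  | add a b ha hb iha ihb => rw [add_mul]; exact add_mem iha ihb
  | smul a y hy ih => rw [smul_eq_mul, mul_assoc]; exact Ideal.mul_mem_left _ _ ih

lemma main_ind {G : SimpleGraph V} {v : V} {p : MvPolynomial (Fin m × V) K}
    (hp : p ∈ genBEI K m (addNbhdClique G v)) :
    p - phiSub K m v p ∈ genBEI K m G ∧
      ∀ k : Fin m, X (k, v) * phiSub K m v p ∈ genBEI K m G := by
  induction hp using Submodule.span_induction with
  | mem f hf =>
      obtain ⟨i, j, t, l, hij, hadj, rfl⟩ := hf
      rcases addNbhdClique_adj.mp hadj with hG | ⟨htl, hvt, hvl⟩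
      · by_cases ht : t = v
        · have hphi : phiSub K m v (X (i, t) * X (j, l) - X (i, l) * X (j, t)) = 0 := by
            simp [phiSub, ht]
          refine ⟨by rw [hphi, sub_zero]; exact Ideal.subset_span ⟨i, j, t, l, hij, hG, rfl⟩,
            fun k => by rw [hphi, mul_zero]; exact zero_mem _⟩
        · by_cases hl : l = v
          · have hphi : phiSub K m v (X (i, t) * X (j, l) - X (i, l) * X (j, t)) = 0 := by
              simp [phiSub, hl]
            refine ⟨by rw [hphi, sub_zero]; exact Ideal.subset_span ⟨i, j, t, l, hij, hG, rfl⟩,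
              fun k => by rw [hphi, mul_zero]; exact zero_mem _⟩
          · have hphi : phiSub K m v (X (i, t) * X (j, l) - X (i, l) * X (j, t)) =
                X (i, t) * X (j, l) - X (i, l) * X (j, t) := by
              simp [phiSub, ht, hl]
            refine ⟨by rw [hphi, sub_self]; exact zero_mem _, fun k => by
              rw [hphi]
              exact Ideal.mul_mem_left _ _ (Ideal.subset_span ⟨i, j, t, l, hij, hG, rfl⟩)⟩
      · have ht : t ≠ v := hvt.ne'
        have hl : l ≠ v := hvl.ne'
        have hphi : phiSub K m v (X (i, t) * X (j, l) - X (i, l) * X (j, t)) =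
            X (i, t) * X (j, l) - X (i, l) * X (j, t) := by
          simp [phiSub, ht, hl]
        refine ⟨by rw [hphi, sub_self]; exact zero_mem _, fun k => by
          rw [hphi]; exact xmul_mem K m hij hvt hvl⟩
  | zero => exact ⟨by simp, fun k => by simp⟩
  | add x y hx hy ihx ihy =>
      refine ⟨?_, fun k => ?_⟩
      · have h : x + y - phiSub K m v (x + y) =
            (x - phiSub K m v x) + (y - phiSub K m v y) := by rw [map_add]; ring
        rw [h]; exact add_mem ihx.1 ihy.1
      · rw [map_add, mul_add]; exact add_mem (ihx.2 k) (ihy.2 k)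
  | smul a x hx ih =>
      refine ⟨?_, fun k => ?_⟩
      · have key : a • x - phiSub K m v (a • x) =
            a * (x - phiSub K m v x) + (a - phiSub K m v a) * phiSub K m v x := by
          rw [smul_eq_mul, map_mul]; ring
        rw [key]
        exact add_mem (Ideal.mul_mem_left _ _ ih.1)
          (span_xv_mul K m ih.2 _ (sub_phi_mem K m v a))
      · rw [smul_eq_mul, map_mul, ← mul_assoc, mul_comm (X (k, v)) (phiSub K m v a),
          mul_assoc]
        exact Ideal.mul_mem_left _ _ (ih.2 k)

end Aux

theorem genBEI_intersection_internal_vertex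
    (K : Type) [Field K] (m : ℕ) (hm : 2 ≤ m) (V : Type) (G : SimpleGraph V) (v : V)
    (hv : ¬ IsLeafVert G v) :
    genBEI K m G = genBEI K m (addNbhdClique G v) ⊓
      (Ideal.span {f | ∃ i : Fin m, f = (X (i, v) : MvPolynomial (Fin m × V) K)} ⊔
        genBEI K m (delVert G v)) ∧
    genBEI K m (addNbhdClique G v) ⊔
      (Ideal.span {f | ∃ i : Fin m, f = (X (i, v) : MvPolynomial (Fin m × V) K)} ⊔
        genBEI K m (delVert G v)) =
    Ideal.span {f | ∃ i : Fin m, f = (X (i, v) : MvPolynomial (Fin m × V) K)} ⊔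
      genBEI K m (delVert (addNbhdClique G v) v) := by
  classical
  constructor
  · apply le_antisymm
    · exact le_inf (genBEI_mono K m fun a b h => addNbhdClique_adj.mpr (Or.inl h))
        (genBEI_le_sup K m G v)
    · intro p hp
      obtain ⟨hp1, hp2⟩ := Submodule.mem_inf.mp hp
      obtain ⟨y, hy, z, hz, hyz⟩ := Submodule.mem_sup.mp hp2
      have h1 := (main_ind K m hp1).1
      have hphi : phiSub K m v p = phiSub K m v z := by
        rw [← hyz, map_add, phi_xv_eq_zero K m hy, zero_add]
      have h2 : phiSub K m v p ∈ genBEI K m G := by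
        rw [hphi]; exact phi_del_mem K m hz
      have hsplit : p = (p - phiSub K m v p) + phiSub K m v p := by ring
      rw [hsplit]; exact add_mem h1 h2
  · apply le_antisymm
    · refine sup_le (genBEI_le_sup K m (addNbhdClique G v) v)
        (sup_le le_sup_left (le_sup_of_le_right (genBEI_mono K m fun a b h => ?_)))
      rw [delVert_adj] at h ⊢
      exact ⟨addNbhdClique_adj.mpr (Or.inl h.1), h.2⟩
    · exact sup_le (le_sup_of_le_right le_sup_left)
        (le_sup_of_le_left (genBEI_mono K m fun a b h => (delVert_adj.mp h).1))
end
end
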